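/- arXiv:2306.15267 — 8 statements merged into one kernel-verified Lean document; each statement's English description precedes it below -/
import Mathlib

section
/- A matroid M = (E, B) satisfies ρ(A) ≤ ρ(E) for all nonempty A ⊆ E (where ρ(A) = |A|/rank(A)) if and only if there exists a measure μ on B such that μ({B ∈ B : e ∈ B}) takes the same value for all e ∈ E. -/
open Finset

variable {α : Type*} [DecidableEq α]

/-- A collection of bases of a (loopful-permitting) matroid on ground set `E`:
nonempty, contained in `E`, and satisfying the base-exchange axiom. -/
def isBaseFamily (E : Finset α) (Bs : Finset (Finset α)) : Prop :=
  Bs.Nonempty ∧ (∀ B ∈ Bs, B ⊆ E) ∧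
    ∀ A ∈ Bs, ∀ B ∈ Bs, ∀ a ∈ A \ B, ∃ b ∈ B \ A, insert b (A.erase a) ∈ Bs

/-- The rank of a subset `A`: the largest intersection of `A` with a basis. -/
def rk (Bs : Finset (Finset α)) (A : Finset α) : ℕ :=
  Bs.sup fun B => (B ∩ A).card

/-- Every element of the ground set lies in some basis. -/
def loopless (E : Finset α) (Bs : Finset (Finset α)) : Prop :=
  ∀ e ∈ E, ∃ B ∈ Bs, e ∈ B

/-- Uniformly dense: `ρ(A) ≤ ρ(E)` for all nonempty `A ⊆ E`, in cross-multiplied form. -/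
def uniformlyDense (E : Finset α) (Bs : Finset (Finset α)) : Prop :=
  ∀ A ⊆ E, A.Nonempty → (A.card : ℝ) * (rk Bs E : ℝ) ≤ (E.card : ℝ) * (rk Bs A : ℝ)

theorem card_bases_eq {E : Finset α} {Bs : Finset (Finset α)} (hM : isBaseFamily E Bs) :
    ∀ A ∈ Bs, ∀ B ∈ Bs, A.card = B.card := by
  obtain ⟨-, -, hex⟩ := hM
  suffices H : ∀ k A, A ∈ Bs → ∀ B ∈ Bs, (A \ B).card = k → A.card = B.card by
    intro A hA B hB; exact H _ A hA B hB rfl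
  intro k
  induction k using Nat.strong_induction_on with
  | _ k ih =>
  intro A hA B hB h
  rcases Nat.eq_zero_or_pos k with hk | hk
  · subst hk
    have hAB : A ⊆ B := by
      rw [card_eq_zero, sdiff_eq_empty_iff_subset] at h; exact h
    by_contra hne
    have : ¬ B ⊆ A := fun hBA => hne (by rw [Finset.Subset.antisymm hAB hBA])
    obtain ⟨b, hbB, hbA⟩ := not_subset.mp this
    obtain ⟨c, hc, -⟩ := hex B hB A hA b (mem_sdiff.mpr ⟨hbB, hbA⟩)
    rw [mem_sdiff] at hc
    exact hc.2 (hAB hc.1)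
  · obtain ⟨a, ha⟩ := card_pos.mp (h ▸ hk)
    obtain ⟨b, hb, hA'⟩ := hex A hA B hB a ha
    rw [mem_sdiff] at ha hb
    have hcard : (insert b (A.erase a)).card = A.card := by
      rw [card_insert_of_notMem (fun hmem => hb.2 (erase_subset _ _ hmem)),
        card_erase_of_mem ha.1]
      have := Finset.card_pos.mpr ⟨a, ha.1⟩
      omega
    have hsd : (insert b (A.erase a)) \ B = (A \ B).erase a := by
      ext x
      simp only [mem_sdiff, mem_insert, mem_erase]
      constructor
      · rintro ⟨hx1 | hx1, hx2⟩
        · exact absurd (hx1 ▸ hb.1) hx2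
        · exact ⟨hx1.1, hx1.2, hx2⟩
      · rintro ⟨hx1, hx2, hx3⟩
        exact ⟨Or.inr ⟨hx1, hx2⟩, hx3⟩
    have hlt : ((insert b (A.erase a)) \ B).card < k := by
      rw [hsd, card_erase_of_mem (mem_sdiff.mpr ha)]; omega
    have := ih _ hlt _ hA' B hB rfl
    omega

theorem key_exchange {E : Finset α} {Bs : Finset (Finset α)} (hM : isBaseFamily E Bs) :
    ∀ B ∈ Bs, ∀ B' ∈ Bs, ∀ S : Finset α, ∃ B'' ∈ Bs,
      (B' ∩ S).card ≤ (B'' ∩ S).card ∧ ∀ T ⊆ S, (B ∩ T).card ≤ (B'' ∩ T).card := by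
  have hcard := card_bases_eq hM
  obtain ⟨-, -, hex⟩ := hM
  suffices H : ∀ k B, B ∈ Bs → ∀ B' ∈ Bs, (B' \ B).card = k → ∀ S : Finset α, ∃ B'' ∈ Bs,
      (B' ∩ S).card ≤ (B'' ∩ S).card ∧ ∀ T ⊆ S, (B ∩ T).card ≤ (B'' ∩ T).card by
    intro B hB B' hB' S; exact H _ B hB B' hB' rfl S
  intro k
  induction k using Nat.strong_induction_on with
  | _ k ih =>
  intro B hB B' hB' hk S
  by_cases hle : (B' ∩ S).card ≤ (B ∩ S).card
  · exact ⟨B, hB, hle, fun T _ => le_rfl⟩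
  push_neg at hle
  -- find a ∈ (B \ B') \ S
  have hBB' : (B \ B').card = (B' \ B).card := by
    have h1 := Finset.card_inter_add_card_sdiff B B'
    have h2 := Finset.card_inter_add_card_sdiff B' B
    rw [Finset.inter_comm B' B] at h2
    have := hcard B hB B' hB'
    omega
  have hne : ((B \ B') \ S).Nonempty := by
    rw [Finset.nonempty_iff_ne_empty]
    intro hemp
    have hsub : B \ B' ⊆ S := by
      intro x hx
      by_contra hxS
      exact (Finset.notMem_empty x) (hemp ▸ Finset.mem_sdiff.mpr ⟨hx, hxS⟩)
    have e1 := Finset.card_inter_add_card_sdiff (B ∩ S) B'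
    have e2 := Finset.card_inter_add_card_sdiff (B' ∩ S) B
    have e3 : B ∩ S ∩ B' = B' ∩ S ∩ B := by
      ext x; simp only [Finset.mem_inter]; tauto
    have e4 : (B' ∩ S) \ B ⊆ B' \ B := by
      intro x hx; rw [Finset.mem_sdiff] at hx ⊢
      exact ⟨(Finset.mem_inter.mp hx.1).1, hx.2⟩
    have e5 : B \ B' ⊆ (B ∩ S) \ B' := by
      intro x hx
      rw [Finset.mem_sdiff] at hx ⊢
      exact ⟨Finset.mem_inter.mpr ⟨hx.1, hsub (Finset.mem_sdiff.mpr hx)⟩, hx.2⟩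
    have e6 := Finset.card_le_card e4
    have e7 := Finset.card_le_card e5
    rw [e3] at e1
    omega
  obtain ⟨a, ha⟩ := hne
  rw [Finset.mem_sdiff] at ha
  obtain ⟨b, hb, hB1⟩ := hex B hB B' hB' a ha.1
  rw [Finset.mem_sdiff] at hb
  have haB := Finset.mem_sdiff.mp ha.1
  set B1 := insert b (B.erase a) with hB1def
  have hsd : B' \ B1 = (B' \ B).erase b := by
    ext x
    simp only [hB1def, Finset.mem_sdiff, Finset.mem_insert, Finset.mem_erase]
    have hxa : x ∈ B' → x ≠ a := fun h1 h2 => haB.2 (h2 ▸ h1)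
    tauto
  have hlt : (B' \ B1).card < k := by
    rw [hsd, Finset.card_erase_of_mem (Finset.mem_sdiff.mpr ⟨hb.1, hb.2⟩)]
    have : (B' \ B).card ≠ 0 := by
      intro h0
      rw [Finset.card_eq_zero] at h0
      exact (Finset.notMem_empty b) (h0 ▸ Finset.mem_sdiff.mpr ⟨hb.1, hb.2⟩)
    omega
  obtain ⟨B'', hB''mem, hS, hT⟩ := ih _ hlt B1 hB1 B' hB' rfl S
  refine ⟨B'', hB''mem, hS, fun T hTS => le_trans ?_ (hT T hTS)⟩
  apply Finset.card_le_card
  intro x hx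
  rw [Finset.mem_inter] at hx ⊢
  refine ⟨Finset.mem_insert.mpr (Or.inr (Finset.mem_erase.mpr ⟨?_, hx.1⟩)), hx.2⟩
  intro hxa
  exact ha.2 (hTS (hxa ▸ hx.2))

theorem le_rk {Bs : Finset (Finset α)} {B : Finset α} (hB : B ∈ Bs) (A : Finset α) :
    (B ∩ A).card ≤ rk Bs A := Finset.le_sup (f := fun B => (B ∩ A).card) hB

theorem exists_rk {Bs : Finset (Finset α)} (hne : Bs.Nonempty) (A : Finset α) :
    ∃ B ∈ Bs, (B ∩ A).card = rk Bs A := by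
  obtain ⟨B, hB, h⟩ := Finset.exists_mem_eq_sup Bs hne (fun B => (B ∩ A).card)
  exact ⟨B, hB, h.symm⟩

theorem rk_ground {E : Finset α} {Bs : Finset (Finset α)} (hM : isBaseFamily E Bs)
    {B : Finset α} (hB : B ∈ Bs) : rk Bs E = B.card := by
  have hsub := hM.2.1
  have hcard := card_bases_eq hM
  apply le_antisymm
  · apply Finset.sup_le
    intro B' hB'
    rw [Finset.inter_eq_left.mpr (hsub B' hB'), hcard B' hB' B hB]
  · rw [← Finset.inter_eq_left.mpr (hsub B hB)]
    exact le_rk hB E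

theorem rk_mono (Bs : Finset (Finset α)) {A A' : Finset α} (h : A ⊆ A') :
    rk Bs A ≤ rk Bs A' := by
  apply Finset.sup_le
  intro B hB
  exact le_trans (Finset.card_le_card (Finset.inter_subset_inter (Finset.Subset.refl B) h)) (le_rk hB A')

theorem rk_le_card (Bs : Finset (Finset α)) (A : Finset α) : rk Bs A ≤ A.card := by
  apply Finset.sup_le
  intro B _
  exact Finset.card_le_card Finset.inter_subset_right

theorem rk_pos {E : Finset α} {Bs : Finset (Finset α)} (hl : loopless E Bs)
    {A : Finset α} (hA : A ⊆ E) (hne : A.Nonempty) : 0 < rk Bs A := by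
  obtain ⟨e, he⟩ := hne
  obtain ⟨B, hB, heB⟩ := hl e (hA he)
  calc 0 < (B ∩ A).card := Finset.card_pos.mpr ⟨e, Finset.mem_inter.mpr ⟨heB, he⟩⟩
    _ ≤ rk Bs A := le_rk hB A

theorem greedy_chain {E : Finset α} {Bs : Finset (Finset α)} (hM : isBaseFamily E Bs)
    (C : ℕ → Finset α) (hC : ∀ i j, i ≤ j → C i ⊆ C j) (m : ℕ) :
    ∃ B ∈ Bs, ∀ i ≤ m, (B ∩ C i).card = rk Bs (C i) := by
  induction m with
  | zero =>
    obtain ⟨B, hB, h⟩ := exists_rk hM.1 (C 0)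
    exact ⟨B, hB, fun i hi => Nat.le_zero.mp hi ▸ h⟩
  | succ m ihm =>
    obtain ⟨B, hB, hBi⟩ := ihm
    obtain ⟨B', hB', hB'eq⟩ := exists_rk hM.1 (C (m + 1))
    obtain ⟨B'', hB'', hS, hT⟩ := key_exchange hM B hB B' hB' (C (m + 1))
    refine ⟨B'', hB'', fun i hi => ?_⟩
    rcases Nat.lt_or_ge i (m + 1) with hlt | hge
    · have h1 := hT (C i) (hC i (m + 1) (by omega))
      have h2 := le_rk hB'' (C i)
      have h3 := hBi i (by omega)
      omega
    · have hieq : i = m + 1 := by omega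
      subst hieq
      have h2 := le_rk hB'' (C (m + 1))
      omega

theorem sum_toFinset_eq_range (e₀ : α) (f : α → ℝ) :
    ∀ l : List α, l.Nodup →
      ∑ e ∈ l.toFinset, f e = ∑ i ∈ Finset.range l.length, f (l.getD i e₀) := by
  intro l
  induction l with
  | nil => simp
  | cons a t ih =>
    intro hnd
    rw [List.nodup_cons] at hnd
    rw [List.toFinset_cons, Finset.sum_insert (by simpa using hnd.1), ih hnd.2,
      List.length_cons, Finset.sum_range_succ']
    simp [add_comm]

theorem abel_sum (n : ℕ) (hn : 0 < n) (g c : ℕ → ℝ) :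
    ∑ i ∈ Finset.range n, c i * g i
      = (∑ i ∈ Finset.range n, c i) * g (n - 1)
        + ∑ j ∈ Finset.range (n - 1), (g j - g (j + 1)) * (∑ i ∈ Finset.range (j + 1), c i) := by
  have tele : ∀ i < n, g i = g (n - 1) + ∑ j ∈ Finset.Ico i (n - 1), (g j - g (j + 1)) := by
    intro i hi
    rcases Nat.lt_or_ge i (n - 1) with h | h
    · rw [Finset.sum_Ico_eq_sub _ (by omega), Finset.sum_range_sub' g, Finset.sum_range_sub' g]
      ring
    · have : i = n - 1 := by omega
      subst this
      simp
  calc ∑ i ∈ Finset.range n, c i * g i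
      = ∑ i ∈ Finset.range n,
          (c i * g (n - 1) + ∑ j ∈ Finset.Ico i (n - 1), (g j - g (j + 1)) * c i) := by
        refine Finset.sum_congr rfl fun i hi => ?_
        rw [tele i (Finset.mem_range.mp hi), mul_add, Finset.mul_sum]
        congr 1
        exact Finset.sum_congr rfl fun j _ => mul_comm _ _
    _ = (∑ i ∈ Finset.range n, c i) * g (n - 1)
        + ∑ i ∈ Finset.range n, ∑ j ∈ Finset.Ico i (n - 1), (g j - g (j + 1)) * c i := by
        rw [Finset.sum_add_distrib, Finset.sum_mul]
    _ = (∑ i ∈ Finset.range n, c i) * g (n - 1)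
        + ∑ j ∈ Finset.range (n - 1), (g j - g (j + 1)) * ∑ i ∈ Finset.range (j + 1), c i := by
        congr 1
        have hIco : ∀ i, Finset.Ico i (n - 1) = (Finset.range (n - 1)).filter (fun j => i ≤ j) := by
          intro i; ext j
          simp only [Finset.mem_Ico, Finset.mem_filter, Finset.mem_range]
          omega
        calc ∑ i ∈ Finset.range n, ∑ j ∈ Finset.Ico i (n - 1), (g j - g (j + 1)) * c i
            = ∑ i ∈ Finset.range n, ∑ j ∈ Finset.range (n - 1),
                if i ≤ j then (g j - g (j + 1)) * c i else 0 := by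
              refine Finset.sum_congr rfl fun i _ => ?_
              rw [hIco i, Finset.sum_filter]
          _ = ∑ j ∈ Finset.range (n - 1), ∑ i ∈ Finset.range n,
                if i ≤ j then (g j - g (j + 1)) * c i else 0 := Finset.sum_comm
          _ = ∑ j ∈ Finset.range (n - 1), (g j - g (j + 1)) * ∑ i ∈ Finset.range (j + 1), c i := by
              refine Finset.sum_congr rfl fun j hj => ?_
              have hj' := Finset.mem_range.mp hj
              have hfil : (Finset.range n).filter (fun i => i ≤ j) = Finset.range (j + 1) := by
                ext i
                simp only [Finset.mem_filter, Finset.mem_range]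
                omega
              rw [← Finset.sum_filter, hfil, Finset.mul_sum]

theorem exists_sorted_list (E : Finset α) (w : α → ℝ) :
    ∃ l : List α, l.Nodup ∧ l.toFinset = E ∧ l.length = E.card ∧
      ∀ (e₀ : α) (i j : ℕ), i ≤ j → j < l.length → w (l.getD j e₀) ≤ w (l.getD i e₀) := by
  set l := E.toList.mergeSort (fun a b => decide (w b ≤ w a)) with hl
  have hperm : l.Perm E.toList := List.mergeSort_perm _ _
  have hnd : l.Nodup := hperm.nodup_iff.mpr E.nodup_toList
  have htf : l.toFinset = E := by
    rw [List.toFinset_eq_of_perm _ _ hperm, Finset.toList_toFinset]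
  have hlen : l.length = E.card := by
    rw [hperm.length_eq, Finset.length_toList]
  have hsorted := List.pairwise_mergeSort
    (le := fun a b => decide (w b ≤ w a))
    (fun a b c hab hbc => by
      simp only [decide_eq_true_eq] at *
      exact le_trans hbc hab)
    (fun a b => by
      simp only [Bool.or_eq_true, decide_eq_true_eq]
      exact (le_total (w b) (w a)))
    E.toList
  rw [← hl] at hsorted
  rw [List.pairwise_iff_getElem] at hsorted
  refine ⟨l, hnd, htf, hlen, fun e₀ i j hij hj => ?_⟩
  rcases Nat.lt_or_ge i j with h | h
  · have := hsorted i j (by omega) hj h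
    simp only [decide_eq_true_eq] at this
    rw [List.getD_eq_getElem l e₀ hj, List.getD_eq_getElem l e₀ (show i < l.length by omega)]
    exact this
  · have : i = j := by omega
    subst this
    exact le_refl _

theorem main_ineq {E : Finset α} {Bs : Finset (Finset α)} (hM : isBaseFamily E Bs)
    (hd : ∀ A ⊆ E, A.Nonempty → (A.card : ℝ) * (rk Bs E : ℝ) ≤ (E.card : ℝ) * (rk Bs A : ℝ))
    (hE : E.Nonempty) (w : α → ℝ) :
    ∃ B ∈ Bs, (rk Bs E : ℝ) * ∑ e ∈ E, w e ≤ (E.card : ℝ) * ∑ e ∈ B, w e := by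
  obtain ⟨e₀, he₀⟩ := hE
  obtain ⟨l, hnd, htf, hlen, hsort⟩ := exists_sorted_list E w
  set n := l.length with hn
  have hnpos : 0 < n := by
    rw [hlen]
    exact Finset.card_pos.mpr ⟨e₀, he₀⟩
  -- the chain
  set C : ℕ → Finset α := fun k => (l.take k).toFinset with hC
  have hCmono : ∀ i j, i ≤ j → C i ⊆ C j := by
    intro i j hij x hx
    rw [hC, List.mem_toFinset] at hx ⊢
    obtain ⟨m, hm, hxm⟩ := List.mem_iff_getElem.mp hx
    have hmi : m < i := by
      have := List.length_take (i := i) (l := l) ▸ hm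
      omega
    have hmn : m < n := by
      have : m < l.length := by
        have h1 : i ≤ n ∨ n ≤ i := le_total _ _
        have := hm
        rw [List.length_take] at this
        omega
      omega
    refine List.mem_iff_getElem.mpr ⟨m, ?_, ?_⟩
    · rw [List.length_take]; omega
    · rw [List.getElem_take] at hxm ⊢
      exact hxm
  have hCsubE : ∀ k, C k ⊆ E := by
    intro k x hx
    rw [hC, List.mem_toFinset] at hx
    rw [← htf, List.mem_toFinset]
    exact List.take_subset k l hx
  have hCn : C n = E := by
    show (l.take n).toFinset = E
    rw [hn, List.take_length, htf]
  have hCcard : ∀ k ≤ n, (C k).card = k := by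
    intro k hk
    rw [hC, List.toFinset_card_of_nodup ((l.take_sublist k).nodup hnd), List.length_take]
    omega
  -- greedy basis
  obtain ⟨B, hB, hgreedy⟩ := greedy_chain hM C hCmono n
  have hBsubE := hM.2.1 B hB
  -- indicator sums
  set g : ℕ → ℝ := fun i => w (l.getD i e₀) with hg
  set c : Finset α → ℕ → ℝ := fun D i => if l.getD i e₀ ∈ D then 1 else 0 with hc
  have F4 : ∀ D ⊆ E, ∑ e ∈ D, w e = ∑ i ∈ Finset.range n, c D i * g i := by
    intro D hD
    have : ∀ i, c D i * g i = (fun e => if e ∈ D then w e else 0) (l.getD i e₀) := by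
      intro i
      rw [hc, hg]
      by_cases h : l.getD i e₀ ∈ D <;> simp [h]
    calc ∑ e ∈ D, w e = ∑ e ∈ E, (if e ∈ D then w e else 0) := by
          rw [← Finset.sum_filter, Finset.filter_mem_eq_inter,
            Finset.inter_eq_right.mpr hD]
      _ = ∑ e ∈ l.toFinset, (if e ∈ D then w e else 0) := by rw [htf]
      _ = ∑ i ∈ Finset.range n, (fun e => if e ∈ D then w e else 0) (l.getD i e₀) :=
          sum_toFinset_eq_range e₀ _ l hnd
      _ = ∑ i ∈ Finset.range n, c D i * g i := by
          refine Finset.sum_congr rfl fun i _ => (this i).symm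
  have F5 : ∀ (D : Finset α), ∀ k ≤ n, ((D ∩ C k).card : ℝ) = ∑ i ∈ Finset.range k, c D i := by
    intro D k hk
    have hlen_take : (l.take k).length = k := by rw [List.length_take]; omega
    have hgetD : ∀ i < k, (l.take k).getD i e₀ = l.getD i e₀ := by
      intro i hi
      rw [List.getD_eq_getElem _ e₀ (by omega), List.getD_eq_getElem _ e₀ (by omega),
        List.getElem_take]
    calc ((D ∩ C k).card : ℝ) = ∑ e ∈ D ∩ C k, (1 : ℝ) := by rw [Finset.sum_const]; simp
      _ = ∑ e ∈ C k, (if e ∈ D then (1 : ℝ) else 0) := by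
          rw [← Finset.sum_filter, Finset.filter_mem_eq_inter, Finset.inter_comm]
      _ = ∑ e ∈ (l.take k).toFinset, (fun e => if e ∈ D then (1 : ℝ) else 0) e := rfl
      _ = ∑ i ∈ Finset.range (l.take k).length,
            (fun e => if e ∈ D then (1 : ℝ) else 0) ((l.take k).getD i e₀) :=
          sum_toFinset_eq_range e₀ _ _ ((l.take_sublist k).nodup hnd)
      _ = ∑ i ∈ Finset.range k, c D i := by
          rw [hlen_take]
          refine Finset.sum_congr rfl fun i hi => ?_
          rw [hc]
          simp only
          rw [hgetD i (Finset.mem_range.mp hi)]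
  -- apply Abel to B and E
  have habelB := abel_sum n hnpos g (c B)
  have habelE := abel_sum n hnpos g (c E)
  have hsumB : ∑ i ∈ Finset.range n, c B i = ((rk Bs E : ℕ) : ℝ) := by
    rw [← F5 B n le_rfl, hCn, Finset.inter_eq_left.mpr hBsubE, rk_ground hM hB]
  have hsumE : ∑ i ∈ Finset.range n, c E i = (E.card : ℝ) := by
    rw [← F5 E n le_rfl, hCn, Finset.inter_self]
  have hMB : ∀ j < n, ((rk Bs (C j) : ℕ) : ℝ) = ∑ i ∈ Finset.range j, c B i := by
    intro j hj
    rw [← F5 B j (by omega), ← hgreedy j (by omega)]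
  have hME : ∀ j ≤ n, ((j : ℕ) : ℝ) = ∑ i ∈ Finset.range j, c E i := by
    intro j hj
    rw [← F5 E j hj, Finset.inter_eq_right.mpr (hCsubE j), hCcard j hj]
  refine ⟨B, hB, ?_⟩
  rw [F4 B hBsubE, F4 E (Finset.Subset.refl E), habelB, habelE, hsumB, hsumE]
  rw [mul_add, mul_add]
  have hfirst : (rk Bs E : ℝ) * ((E.card : ℝ) * g (n - 1))
      = (E.card : ℝ) * ((rk Bs E : ℝ) * g (n - 1)) := by ring
  rw [hfirst]
  refine add_le_add le_rfl ?_
  rw [Finset.mul_sum, Finset.mul_sum]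
  refine Finset.sum_le_sum fun j hj => ?_
  have hjn : j < n - 1 := Finset.mem_range.mp hj
  rw [← hME (j + 1) (by omega), ← hMB (j + 1) (by omega)]
  have hd0 : 0 ≤ g j - g (j + 1) := by
    have := hsort e₀ j (j + 1) (by omega) (by omega)
    rw [hg]
    simpa using this
  have hCne : (C (j + 1)).Nonempty := by
    rw [← Finset.card_pos, hCcard (j + 1) (by omega)]
    omega
  have hdens := hd (C (j + 1)) (hCsubE (j + 1)) hCne
  rw [hCcard (j + 1) (by omega)] at hdens
  push_cast at hdens ⊢
  nlinarith [mul_le_mul_of_nonneg_left hdens hd0]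

/-- A loopless matroid satisfies `ρ(A) ≤ ρ(E)` for all nonempty `A ⊆ E` iff there is a
(normalized) measure on the bases whose marginal `μ({B : e ∈ B})` is the same for all `e ∈ E`. -/
theorem uniformlyDense_iff_exists_uniform_measure (E : Finset α) (Bs : Finset (Finset α))
    (hM : isBaseFamily E Bs) (hl : loopless E Bs) :
    (∀ A ⊆ E, A.Nonempty →
        (A.card : ℝ) / (rk Bs A : ℝ) ≤ (E.card : ℝ) / (rk Bs E : ℝ)) ↔
      ∃ μ : Finset α → ℝ, (∀ B ∈ Bs, 0 ≤ μ B) ∧ (∑ B ∈ Bs, μ B = 1) ∧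
        ∃ c : ℝ, ∀ e ∈ E, ∑ B ∈ Bs.filter (fun B => e ∈ B), μ B = c := by
  classical
  have hsub := hM.2.1
  have marg : ∀ (μ : Finset α → ℝ) (A : Finset α),
      ∑ e ∈ A, (∑ B ∈ Bs.filter (fun B => e ∈ B), μ B)
        = ∑ B ∈ Bs, μ B * ((B ∩ A).card : ℝ) := by
    intro μ A
    calc ∑ e ∈ A, (∑ B ∈ Bs.filter (fun B => e ∈ B), μ B)
        = ∑ e ∈ A, ∑ B ∈ Bs, if e ∈ B then μ B else 0 := by
          refine Finset.sum_congr rfl fun e _ => ?_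
          rw [Finset.sum_filter]
      _ = ∑ B ∈ Bs, ∑ e ∈ A, if e ∈ B then μ B else 0 := Finset.sum_comm
      _ = ∑ B ∈ Bs, μ B * ((B ∩ A).card : ℝ) := by
          refine Finset.sum_congr rfl fun B _ => ?_
          rw [← Finset.sum_filter, Finset.filter_mem_eq_inter, Finset.sum_const,
            Finset.inter_comm]
          push_cast
          ring
  constructor
  · -- density → measure
    intro hdens
    rcases E.eq_empty_or_nonempty with hE | hE
    · refine ⟨fun _ => 1 / (Bs.card : ℝ), fun B _ => by positivity, ?_, 0, fun e he => by
        simp [hE] at he⟩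
      rw [Finset.sum_const]
      have : (0 : ℕ) < Bs.card := Finset.card_pos.mpr hM.1
      rw [nsmul_eq_mul]; field_simp
    · have hrE : 0 < rk Bs E := rk_pos hl (Finset.Subset.refl E) hE
      have hnE : 0 < E.card := Finset.card_pos.mpr hE
      have hnE' : (0 : ℝ) < (E.card : ℝ) := by exact_mod_cast hnE
      have hd : ∀ A ⊆ E, A.Nonempty →
          (A.card : ℝ) * (rk Bs E : ℝ) ≤ (E.card : ℝ) * (rk Bs A : ℝ) := by
        intro A hA hAne
        have hrA : 0 < rk Bs A := rk_pos hl hA hAne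
        have := hdens A hA hAne
        rw [div_le_div_iff₀ (by exact_mod_cast hrA) (by exact_mod_cast hrE)] at this
        linarith
      set ι := {x // x ∈ E}
      set V := EuclideanSpace ℝ ι with hV
      set pt : V := WithLp.toLp 2 (fun _ => (rk Bs E : ℝ) / (E.card : ℝ)) with hpt
      set P : Finset α → V := fun B => WithLp.toLp 2 (fun e => if (e : α) ∈ B then 1 else 0) with hP
      have hmem : pt ∈ convexHull ℝ (↑(Bs.image P) : Set V) := by
        by_contra hnot
        obtain ⟨f, u, hfu, hupt⟩ := geometric_hahn_banach_closed_point
          (convex_convexHull ℝ _) ((Bs.image P).finite_toSet.isClosed_convexHull (𝕜 := ℝ)) hnot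
        set w : α → ℝ := fun a =>
          if h : a ∈ E then f (EuclideanSpace.single (⟨a, h⟩ : ι) 1) else 0 with hw
        have hwe : ∀ e : ι, w (e : α) = f (EuclideanSpace.single e 1) := by
          intro e
          rw [hw]
          simp only [e.2, dif_pos]; rfl
        have hexp : ∀ v : V, f v = ∑ e : ι, v e * w (e : α) := by
          intro v
          have hv : v = ∑ e : ι, v e • EuclideanSpace.single e (1 : ℝ) := by
            ext e
            rw [WithLp.ofLp_sum, Finset.sum_apply]
            simp [EuclideanSpace.single_apply]
            rw [Finset.sum_eq_single e (fun b _ hb => if_neg (Ne.symm hb)) (fun h => absurd (Finset.mem_univ e) h), if_pos rfl]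
          conv_lhs => rw [hv]
          rw [map_sum]
          refine Finset.sum_congr rfl fun e _ => ?_
          rw [map_smul, smul_eq_mul, hwe]
        have hfP : ∀ B ∈ Bs, f (P B) = ∑ a ∈ B, w a := by
          intro B hB
          rw [hexp]
          calc ∑ e : ι, (P B) e * w (e : α)
              = ∑ a ∈ E, (if a ∈ B then (1 : ℝ) else 0) * w a :=
                Finset.sum_coe_sort E (fun a => (if a ∈ B then (1 : ℝ) else 0) * w a)
            _ = ∑ a ∈ E, (if a ∈ B then w a else 0) := by
                refine Finset.sum_congr rfl fun a _ => ?_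
                by_cases h : a ∈ B <;> simp [h]
            _ = ∑ a ∈ E ∩ B, w a := by
                rw [← Finset.sum_filter, Finset.filter_mem_eq_inter]
            _ = ∑ a ∈ B, w a := by rw [Finset.inter_eq_right.mpr (hsub B hB)]
        have hfpt : f pt = ((rk Bs E : ℝ) / (E.card : ℝ)) * ∑ a ∈ E, w a := by
          rw [hexp]
          calc ∑ e : ι, pt e * w (e : α)
              = ∑ a ∈ E, ((rk Bs E : ℝ) / (E.card : ℝ)) * w a :=
                Finset.sum_coe_sort E (fun a => ((rk Bs E : ℝ) / (E.card : ℝ)) * w a)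
            _ = ((rk Bs E : ℝ) / (E.card : ℝ)) * ∑ a ∈ E, w a := by
                rw [Finset.mul_sum]
        obtain ⟨B₀, hB₀, hineq⟩ := main_ineq hM hd hE w
        have h1 : f (P B₀) < u :=
          hfu _ (subset_convexHull ℝ _ (by exact_mod_cast Finset.mem_image_of_mem P hB₀))
        rw [hfP B₀ hB₀] at h1
        rw [hfpt] at hupt
        have h4 : (E.card : ℝ) * ∑ a ∈ B₀, w a < (rk Bs E : ℝ) * ∑ a ∈ E, w a := by
          have h5 := mul_lt_mul_of_pos_left (h1.trans hupt) hnE'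
          have h3 : (E.card : ℝ) * ((rk Bs E : ℝ) / (E.card : ℝ) * ∑ a ∈ E, w a)
              = (rk Bs E : ℝ) * ∑ a ∈ E, w a := by
            rw [← mul_assoc, mul_div_assoc', mul_comm (E.card : ℝ), mul_div_assoc, div_self hnE'.ne', mul_one]
          linarith
        linarith
      rw [Finset.mem_convexHull] at hmem
      obtain ⟨ν, hν0, hν1, hνc⟩ := hmem
      have hPinj : ∀ B₁ ∈ Bs, ∀ B₂ ∈ Bs, P B₁ = P B₂ → B₁ = B₂ := by
        intro B₁ h₁ B₂ h₂ hEq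
        ext a
        by_cases ha : a ∈ E
        · have := congrFun (congrArg WithLp.ofLp hEq) (⟨a, ha⟩ : ι)
          simp only [hP] at this
          by_cases h1a : a ∈ B₁ <;> by_cases h2a : a ∈ B₂ <;>
            simp [h1a, h2a] at this ⊢
        · constructor
          · intro h; exact absurd (hsub B₁ h₁ h) ha
          · intro h; exact absurd (hsub B₂ h₂ h) ha
      refine ⟨fun B => ν (P B), fun B hB => hν0 _ (Finset.mem_image_of_mem P hB), ?_,
        (rk Bs E : ℝ) / (E.card : ℝ), ?_⟩
      · rw [← hν1, Finset.sum_image hPinj]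
      · intro e he
        have hcm : ∑ y ∈ Bs.image P, ν y • y = pt := by
          rw [← hνc, Finset.centerMass_eq_of_sum_1 _ id hν1]
          simp
        rw [Finset.sum_image hPinj] at hcm
        have := congrFun (congrArg WithLp.ofLp hcm) (⟨e, he⟩ : ι)
        rw [WithLp.ofLp_sum, Finset.sum_apply] at this
        simp only [hP, hpt, WithLp.ofLp_smul, Pi.smul_apply, WithLp.ofLp_toLp] at this
        calc ∑ B ∈ Bs.filter (fun B => e ∈ B), ν (P B)
            = ∑ B ∈ Bs, if e ∈ B then ν (P B) else 0 := by rw [Finset.sum_filter]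
          _ = ∑ B ∈ Bs, ν (P B) • (if ((⟨e, he⟩ : ι) : α) ∈ B then (1 : ℝ) else 0) := by
              refine Finset.sum_congr rfl fun B _ => ?_
              by_cases h : e ∈ B <;> simp [h]
          _ = (rk Bs E : ℝ) / (E.card : ℝ) := this
  · -- measure → density
    rintro ⟨μ, hμ0, hμ1, c, hc⟩ A hA hAne
    have hE : E.Nonempty := ⟨hAne.choose, hA hAne.choose_spec⟩
    have hrE : 0 < rk Bs E := rk_pos hl (Finset.Subset.refl E) hE
    have hrA : 0 < rk Bs A := rk_pos hl hA hAne
    have hnE : 0 < E.card := Finset.card_pos.mpr hE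
    have hAc : (A.card : ℝ) * c = ∑ B ∈ Bs, μ B * ((B ∩ A).card : ℝ) := by
      rw [← marg μ A]
      rw [Finset.sum_congr rfl (fun e he => hc e (hA he)), Finset.sum_const]
      push_cast
      ring
    have hEc : (E.card : ℝ) * c = (rk Bs E : ℝ) := by
      have h1 : ∑ e ∈ E, (∑ B ∈ Bs.filter (fun B => e ∈ B), μ B) = (E.card : ℝ) * c := by
        rw [Finset.sum_congr rfl (fun e he => hc e he), Finset.sum_const]
        push_cast
        ring
      have h2 := marg μ E
      rw [h1] at h2
      rw [h2]
      calc ∑ B ∈ Bs, μ B * ((B ∩ E).card : ℝ)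
          = ∑ B ∈ Bs, μ B * (rk Bs E : ℝ) := by
            refine Finset.sum_congr rfl fun B hB => ?_
            rw [Finset.inter_eq_left.mpr (hsub B hB), rk_ground hM hB]
        _ = (rk Bs E : ℝ) := by rw [← Finset.sum_mul, hμ1, one_mul]
    have hAle : (A.card : ℝ) * c ≤ (rk Bs A : ℝ) := by
      rw [hAc]
      calc ∑ B ∈ Bs, μ B * ((B ∩ A).card : ℝ)
          ≤ ∑ B ∈ Bs, μ B * (rk Bs A : ℝ) := by
            refine Finset.sum_le_sum fun B hB => ?_
            exact mul_le_mul_of_nonneg_left (by exact_mod_cast le_rk hB A) (hμ0 B hB)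
        _ = (rk Bs A : ℝ) := by rw [← Finset.sum_mul, hμ1, one_mul]
    rw [div_le_div_iff₀ (by exact_mod_cast hrA) (by exact_mod_cast hrE)]
    have hnE' : (0 : ℝ) < (E.card : ℝ) := by exact_mod_cast hnE
    nlinarith [mul_le_mul_of_nonneg_left hAle (le_of_lt hnE')]
end

section
/- The direct sum M₁ ⊕ M₂ of two matroids on disjoint ground sets is uniformly dense if and only if M₁ and M₂ are both uniformly dense and have equal densities ρ(M₁) = ρ(M₂) = ρ(M₁ ⊕ M₂). -/
open Finset

variable {α : Type*} [DecidableEq α]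

lemma rk_ge_one {E : Finset α} {Bs : Finset (Finset α)} (hl : loopless E Bs)
    {A : Finset α} (hA : A ⊆ E) (hne : A.Nonempty) : 1 ≤ rk Bs A := by
  obtain ⟨e, he⟩ := hne
  obtain ⟨B, hB, heB⟩ := hl e (hA he)
  have h1 : 1 ≤ (B ∩ A).card := Finset.card_pos.2 ⟨e, Finset.mem_inter.2 ⟨heB, he⟩⟩
  exact h1.trans (Finset.le_sup (f := fun B => (B ∩ A).card) hB)

lemma rk_union_eq {E₁ E₂ : Finset α} {Bs₁ Bs₂ : Finset (Finset α)}
    (hdisj : Disjoint E₁ E₂) (hs₁ : ∀ B ∈ Bs₁, B ⊆ E₁) (hs₂ : ∀ B ∈ Bs₂, B ⊆ E₂)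
    (hn₁ : Bs₁.Nonempty) (hn₂ : Bs₂.Nonempty) (A : Finset α) :
    rk (Finset.image₂ (· ∪ ·) Bs₁ Bs₂) A = rk Bs₁ A + rk Bs₂ A := by
  have key : ∀ B₁ ∈ Bs₁, ∀ B₂ ∈ Bs₂,
      ((B₁ ∪ B₂) ∩ A).card = (B₁ ∩ A).card + (B₂ ∩ A).card := by
    intro B₁ hB₁ B₂ hB₂
    rw [Finset.union_inter_distrib_right, Finset.card_union_of_disjoint]
    exact hdisj.mono ((Finset.inter_subset_left).trans (hs₁ B₁ hB₁))
      ((Finset.inter_subset_left).trans (hs₂ B₂ hB₂))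
  apply le_antisymm
  · apply Finset.sup_le
    intro B hB
    obtain ⟨B₁, hB₁, B₂, hB₂, rfl⟩ := Finset.mem_image₂.1 hB
    rw [key B₁ hB₁ B₂ hB₂]
    exact Nat.add_le_add (Finset.le_sup (f := fun B => (B ∩ A).card) hB₁)
      (Finset.le_sup (f := fun B => (B ∩ A).card) hB₂)
  · obtain ⟨B₁, hB₁, h₁⟩ := Finset.exists_mem_eq_sup Bs₁ hn₁ (fun B => (B ∩ A).card)
    obtain ⟨B₂, hB₂, h₂⟩ := Finset.exists_mem_eq_sup Bs₂ hn₂ (fun B => (B ∩ A).card)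
    have hle := Finset.le_sup (f := fun B => (B ∩ A).card)
      (Finset.mem_image₂_of_mem (f := (· ∪ ·)) hB₁ hB₂)
    rw [key B₁ hB₁ B₂ hB₂] at hle
    rw [rk, rk, h₁, h₂]
    exact hle

lemma rk_eq_zero {E₂ : Finset α} {Bs₂ : Finset (Finset α)} (hs₂ : ∀ B ∈ Bs₂, B ⊆ E₂)
    {A : Finset α} (hA : Disjoint A E₂) : rk Bs₂ A = 0 := by
  apply Nat.le_zero.1
  apply Finset.sup_le
  intro B hB
  have h : B ∩ A = ∅ :=
    Finset.disjoint_iff_inter_eq_empty.1 ((hA.symm).mono_left (hs₂ B hB))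
  simp [h]

lemma rk_inter {E₁ : Finset α} {Bs₁ : Finset (Finset α)} (hs₁ : ∀ B ∈ Bs₁, B ⊆ E₁)
    (A : Finset α) : rk Bs₁ (A ∩ E₁) = rk Bs₁ A := by
  apply Finset.sup_congr rfl
  intro B hB
  congr 1
  rw [Finset.inter_comm A E₁, ← Finset.inter_assoc, Finset.inter_eq_left.2 (hs₁ B hB)]

/-- The direct sum of two matroids on disjoint nonempty ground sets is uniformly dense iff
both summands are uniformly dense with equal densities `ρ(M₁) = ρ(M₂) = ρ(M₁ ⊕ M₂)`. -/
theorem uniformlyDense_directSum_iff (E₁ E₂ : Finset α) (Bs₁ Bs₂ : Finset (Finset α))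
    (hdisj : Disjoint E₁ E₂) (hE₁ : E₁.Nonempty) (hE₂ : E₂.Nonempty)
    (hM₁ : isBaseFamily E₁ Bs₁) (hM₂ : isBaseFamily E₂ Bs₂)
    (hl₁ : loopless E₁ Bs₁) (hl₂ : loopless E₂ Bs₂) :
    uniformlyDense (E₁ ∪ E₂) (Finset.image₂ (· ∪ ·) Bs₁ Bs₂) ↔
      uniformlyDense E₁ Bs₁ ∧ uniformlyDense E₂ Bs₂ ∧
        (E₁.card : ℝ) / (rk Bs₁ E₁ : ℝ) = (E₂.card : ℝ) / (rk Bs₂ E₂ : ℝ) ∧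
        (E₂.card : ℝ) / (rk Bs₂ E₂ : ℝ) =
          ((E₁ ∪ E₂).card : ℝ) /
            (rk (Finset.image₂ (· ∪ ·) Bs₁ Bs₂) (E₁ ∪ E₂) : ℝ) := by
  obtain ⟨hn₁, hs₁, -⟩ := hM₁
  obtain ⟨hn₂, hs₂, -⟩ := hM₂
  have hrU : ∀ A, rk (Finset.image₂ (· ∪ ·) Bs₁ Bs₂) A = rk Bs₁ A + rk Bs₂ A :=
    rk_union_eq hdisj hs₁ hs₂ hn₁ hn₂
  have hr1E : rk Bs₁ (E₁ ∪ E₂) = rk Bs₁ E₁ := by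
    rw [← rk_inter hs₁ (E₁ ∪ E₂), Finset.inter_eq_right.2 Finset.subset_union_left]
  have hr2E : rk Bs₂ (E₁ ∪ E₂) = rk Bs₂ E₂ := by
    rw [← rk_inter hs₂ (E₁ ∪ E₂), Finset.inter_eq_right.2 Finset.subset_union_right]
  have hcardE : (E₁ ∪ E₂).card = E₁.card + E₂.card := Finset.card_union_of_disjoint hdisj
  have hr21 : rk Bs₂ E₁ = 0 := rk_eq_zero hs₂ hdisj
  have hr12 : rk Bs₁ E₂ = 0 := rk_eq_zero hs₁ hdisj.symm
  set r₁ := rk Bs₁ E₁ with hr₁def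
  set r₂ := rk Bs₂ E₂ with hr₂def
  have hrUE : rk (Finset.image₂ (· ∪ ·) Bs₁ Bs₂) (E₁ ∪ E₂) = r₁ + r₂ := by
    rw [hrU, hr1E, hr2E]
  have hr₁pos : (0:ℝ) < r₁ := by
    have h := rk_ge_one hl₁ (le_refl E₁) hE₁
    exact_mod_cast Nat.lt_of_lt_of_le Nat.zero_lt_one h
  have hr₂pos : (0:ℝ) < r₂ := by
    have h := rk_ge_one hl₂ (le_refl E₂) hE₂
    exact_mod_cast Nat.lt_of_lt_of_le Nat.zero_lt_one h
  have hn₁pos : (0:ℝ) < E₁.card := by exact_mod_cast Finset.card_pos.2 hE₁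
  have hn₂pos : (0:ℝ) < E₂.card := by exact_mod_cast Finset.card_pos.2 hE₂
  constructor
  · intro hU
    have h1 := hU E₁ Finset.subset_union_left hE₁
    have h2 := hU E₂ Finset.subset_union_right hE₂
    rw [hrUE, hrU E₁, hr21, hcardE, Nat.add_zero] at h1
    rw [hrUE, hrU E₂, hr12, hcardE, Nat.zero_add] at h2
    push_cast at h1 h2
    have heq1 : (E₁.card : ℝ) * (r₁ + r₂) = (E₁.card + E₂.card) * r₁ := by linarith
    have heq2 : (E₂.card : ℝ) * (r₁ + r₂) = (E₁.card + E₂.card) * r₂ := by linarith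
    refine ⟨?_, ?_, ?_, ?_⟩
    · intro A hA hAne
      have h := hU A (hA.trans Finset.subset_union_left) hAne
      have hz : rk Bs₂ A = 0 := rk_eq_zero hs₂ (hdisj.mono_left hA)
      rw [hrUE, hrU A, hz, hcardE, Nat.add_zero] at h
      push_cast at h
      have hsum : (0:ℝ) < (E₁.card : ℝ) + (E₂.card : ℝ) := by linarith
      have key : (A.card : ℝ) * r₁ * ((E₁.card : ℝ) + E₂.card) ≤
          (E₁.card : ℝ) * (rk Bs₁ A) * ((E₁.card : ℝ) + E₂.card) := by
        calc (A.card : ℝ) * r₁ * ((E₁.card : ℝ) + E₂.card)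
            = (A.card : ℝ) * (((E₁.card : ℝ) + E₂.card) * r₁) := by ring
          _ = (A.card : ℝ) * ((E₁.card : ℝ) * (r₁ + r₂)) := by rw [← heq1]
          _ = (E₁.card : ℝ) * ((A.card : ℝ) * (r₁ + r₂)) := by ring
          _ ≤ (E₁.card : ℝ) * (((E₁.card : ℝ) + E₂.card) * (rk Bs₁ A)) :=
              mul_le_mul_of_nonneg_left h hn₁pos.le
          _ = (E₁.card : ℝ) * (rk Bs₁ A) * ((E₁.card : ℝ) + E₂.card) := by ring
      exact le_of_mul_le_mul_right key hsum
    · intro A hA hAne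
      have h := hU A (hA.trans Finset.subset_union_right) hAne
      have hz : rk Bs₁ A = 0 := rk_eq_zero hs₁ (hdisj.symm.mono_left hA)
      rw [hrUE, hrU A, hz, hcardE, Nat.zero_add] at h
      push_cast at h
      have hsum : (0:ℝ) < (E₁.card : ℝ) + (E₂.card : ℝ) := by linarith
      have key : (A.card : ℝ) * r₂ * ((E₁.card : ℝ) + E₂.card) ≤
          (E₂.card : ℝ) * (rk Bs₂ A) * ((E₁.card : ℝ) + E₂.card) := by
        calc (A.card : ℝ) * r₂ * ((E₁.card : ℝ) + E₂.card)
            = (A.card : ℝ) * (((E₁.card : ℝ) + E₂.card) * r₂) := by ring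
          _ = (A.card : ℝ) * ((E₂.card : ℝ) * (r₁ + r₂)) := by rw [← heq2]
          _ = (E₂.card : ℝ) * ((A.card : ℝ) * (r₁ + r₂)) := by ring
          _ ≤ (E₂.card : ℝ) * (((E₁.card : ℝ) + E₂.card) * (rk Bs₂ A)) :=
              mul_le_mul_of_nonneg_left h hn₂pos.le
          _ = (E₂.card : ℝ) * (rk Bs₂ A) * ((E₁.card : ℝ) + E₂.card) := by ring
      exact le_of_mul_le_mul_right key hsum
    · rw [div_eq_div_iff (by positivity) (by positivity)]
      linear_combination heq1
    · rw [hrUE, hcardE]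
      push_cast
      rw [div_eq_div_iff (by positivity) (by positivity)]
      linear_combination heq2
  · rintro ⟨hU1, hU2, hd12, hd2U⟩
    rw [hrUE, hcardE] at hd2U
    push_cast at hd2U
    rw [div_eq_div_iff (by positivity) (by positivity)] at hd12
    rw [div_eq_div_iff (by positivity) (by positivity)] at hd2U
    have heq1 : (E₁.card : ℝ) * (r₁ + r₂) = ((E₁.card : ℝ) + E₂.card) * r₁ := by
      linear_combination hd12
    have heq2 : (E₂.card : ℝ) * (r₁ + r₂) = ((E₁.card : ℝ) + E₂.card) * r₂ := by
      linear_combination hd2U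
    intro A hA hAne
    rw [hrUE, hrU A, hcardE, ← rk_inter hs₁ A, ← rk_inter hs₂ A]
    have hAsplit : A = (A ∩ E₁) ∪ (A ∩ E₂) := by
      rw [← Finset.inter_union_distrib_left, Finset.inter_eq_left.2 hA]
    have hAdisj : Disjoint (A ∩ E₁) (A ∩ E₂) :=
      hdisj.mono Finset.inter_subset_right Finset.inter_subset_right
    have hAcard : A.card = (A ∩ E₁).card + (A ∩ E₂).card := by
      conv_lhs => rw [hAsplit]
      exact Finset.card_union_of_disjoint hAdisj
    have h1 : ((A ∩ E₁).card : ℝ) * ((r₁:ℝ) + r₂) ≤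
        ((E₁.card : ℝ) + E₂.card) * (rk Bs₁ (A ∩ E₁)) := by
      rcases (A ∩ E₁).eq_empty_or_nonempty with he | hne
      · rw [he]
        simp only [Finset.card_empty, Nat.cast_zero, zero_mul]
        exact mul_nonneg (add_nonneg (Nat.cast_nonneg _) (Nat.cast_nonneg _)) (Nat.cast_nonneg _)
      · have h := hU1 (A ∩ E₁) Finset.inter_subset_right hne
        have key : ((A ∩ E₁).card : ℝ) * ((r₁:ℝ) + r₂) * r₁ ≤
            ((E₁.card : ℝ) + E₂.card) * (rk Bs₁ (A ∩ E₁)) * r₁ := by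
          calc ((A ∩ E₁).card : ℝ) * ((r₁:ℝ) + r₂) * r₁
              = ((A ∩ E₁).card : ℝ) * (r₁:ℝ) * (r₁ + r₂) := by ring
            _ ≤ (E₁.card : ℝ) * (rk Bs₁ (A ∩ E₁)) * (r₁ + r₂) := by
                apply mul_le_mul_of_nonneg_right h
                positivity
            _ = (rk Bs₁ (A ∩ E₁) : ℝ) * ((E₁.card : ℝ) * (r₁ + r₂)) := by ring
            _ = (rk Bs₁ (A ∩ E₁) : ℝ) * (((E₁.card : ℝ) + E₂.card) * r₁) := by rw [heq1]
            _ = ((E₁.card : ℝ) + E₂.card) * (rk Bs₁ (A ∩ E₁)) * r₁ := by ring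
        exact le_of_mul_le_mul_right key hr₁pos
    have h2 : ((A ∩ E₂).card : ℝ) * ((r₁:ℝ) + r₂) ≤
        ((E₁.card : ℝ) + E₂.card) * (rk Bs₂ (A ∩ E₂)) := by
      rcases (A ∩ E₂).eq_empty_or_nonempty with he | hne
      · rw [he]
        simp only [Finset.card_empty, Nat.cast_zero, zero_mul]
        exact mul_nonneg (add_nonneg (Nat.cast_nonneg _) (Nat.cast_nonneg _)) (Nat.cast_nonneg _)
      · have h := hU2 (A ∩ E₂) Finset.inter_subset_right hne
        have key : ((A ∩ E₂).card : ℝ) * ((r₁:ℝ) + r₂) * r₂ ≤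
            ((E₁.card : ℝ) + E₂.card) * (rk Bs₂ (A ∩ E₂)) * r₂ := by
          calc ((A ∩ E₂).card : ℝ) * ((r₁:ℝ) + r₂) * r₂
              = ((A ∩ E₂).card : ℝ) * (r₂:ℝ) * (r₁ + r₂) := by ring
            _ ≤ (E₂.card : ℝ) * (rk Bs₂ (A ∩ E₂)) * (r₁ + r₂) := by
                apply mul_le_mul_of_nonneg_right h
                positivity
            _ = (rk Bs₂ (A ∩ E₂) : ℝ) * ((E₂.card : ℝ) * (r₁ + r₂)) := by ring
            _ = (rk Bs₂ (A ∩ E₂) : ℝ) * (((E₁.card : ℝ) + E₂.card) * r₂) := by rw [heq2]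
            _ = ((E₁.card : ℝ) + E₂.card) * (rk Bs₂ (A ∩ E₂)) * r₂ := by ring
        exact le_of_mul_le_mul_right key hr₂pos
    rw [hAcard]
    push_cast
    linarith
end

section
/- A graph G = (V, E) is uniformly dense if and only if for every proper subset A ⊂ E, removing A increases the number of connected components by at most |A|/ρ(G); that is, c(E \ A) − c(E) ≤ |A| · (|V| − c(E))/|E| for all A ⊂ E. -/
open Finset

variable {V : Type*} [Fintype V] [DecidableEq V]

/-- Number of connected components of the graph `(V, A)` for an edge set `A`. -/
noncomputable def compCount (A : Finset (Sym2 V)) : ℕ :=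
  Nat.card (SimpleGraph.fromEdgeSet (↑A : Set (Sym2 V))).ConnectedComponent

/-- The rank of an edge set `A` in the cycle matroid: `|V| - c(A)`. -/
noncomputable def rkE (A : Finset (Sym2 V)) : ℕ := Fintype.card V - compCount A

/-- A graph is uniformly dense if `ρ(A) = |A|/rank(A) ≤ ρ(E)` for all nonempty `A ⊆ E`. -/
def graphUD (G : SimpleGraph V) [Fintype G.edgeSet] : Prop :=
  ∀ A ⊆ G.edgeFinset, A.Nonempty →
    (A.card : ℝ) / (rkE A : ℝ) ≤ (G.edgeFinset.card : ℝ) / (rkE G.edgeFinset : ℝ)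

lemma compCount_mono {A B : Finset (Sym2 V)} (h : A ⊆ B) : compCount B ≤ compCount A := by
  classical
  have hle : SimpleGraph.fromEdgeSet (↑A : Set (Sym2 V)) ≤ SimpleGraph.fromEdgeSet (↑B) :=
    SimpleGraph.fromEdgeSet_mono (by exact_mod_cast h)
  exact Nat.card_le_card_of_surjective
    (SimpleGraph.ConnectedComponent.map (SimpleGraph.Hom.ofLE hle))
    (fun c => c.ind fun v => ⟨(SimpleGraph.fromEdgeSet (↑A)).connectedComponentMk v,
      SimpleGraph.ConnectedComponent.map_mk _ v⟩)

lemma compCount_lt_of_nonempty {G : SimpleGraph V} [Fintype G.edgeSet]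
    {B : Finset (Sym2 V)} (hB : B ⊆ G.edgeFinset) (hne : B.Nonempty) :
    compCount B < Fintype.card V := by
  classical
  obtain ⟨e, he⟩ := hne
  have heG : e ∈ G.edgeSet := by
    have := hB he; rwa [SimpleGraph.mem_edgeFinset] at this
  revert he
  induction e using Sym2.ind with
  | _ u v =>
    intro he
    have huv : u ≠ v := G.ne_of_adj (G.mem_edgeSet.mp heG)
    have hadj : (SimpleGraph.fromEdgeSet (↑B : Set (Sym2 V))).Adj u v := by
      rw [SimpleGraph.fromEdgeSet_adj]
      exact ⟨by exact_mod_cast he, huv⟩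
    have : Fintype (SimpleGraph.fromEdgeSet (↑B : Set (Sym2 V))).ConnectedComponent :=
      Fintype.ofFinite _
    rw [compCount, Nat.card_eq_fintype_card]
    refine Fintype.card_lt_of_surjective_not_injective
      (SimpleGraph.fromEdgeSet (↑B : Set (Sym2 V))).connectedComponentMk
      (fun c => c.ind fun w => ⟨w, rfl⟩) fun hinj => huv (hinj ?_)
    exact SimpleGraph.ConnectedComponent.sound hadj.reachable

/-- A graph is uniformly dense iff removing any proper edge set `A` increases the number of
connected components by at most `|A| · (|V| - c(E))/|E| = |A|/ρ(G)`. -/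
theorem graphUD_iff_componentBound (G : SimpleGraph V) [Fintype G.edgeSet] :
    graphUD G ↔ ∀ A ⊂ G.edgeFinset,
      (compCount (G.edgeFinset \ A) : ℝ) - (compCount G.edgeFinset : ℝ) ≤
        (A.card : ℝ) * ((Fintype.card V : ℝ) - (compCount G.edgeFinset : ℝ)) /
          (G.edgeFinset.card : ℝ) := by
  classical
  by_cases hEe : G.edgeFinset = ∅
  · constructor
    · intro _ A hA
      exact absurd hA (by simp [hEe])
    · intro _ A hAsub hAne
      rw [hEe, Finset.subset_empty] at hAsub
      exact absurd (hAsub ▸ hAne) (by simp)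
  · have hEne : G.edgeFinset.Nonempty := Finset.nonempty_of_ne_empty hEe
    have hmpos : (0:ℝ) < G.edgeFinset.card := by exact_mod_cast Finset.card_pos.mpr hEne
    have hcE_lt : compCount G.edgeFinset < Fintype.card V :=
      compCount_lt_of_nonempty Finset.Subset.rfl hEne
    have hrkE : (rkE G.edgeFinset : ℝ) =
        (Fintype.card V : ℝ) - (compCount G.edgeFinset : ℝ) := by
      rw [rkE, Nat.cast_sub hcE_lt.le]
    have hrpos : (0:ℝ) < (Fintype.card V : ℝ) - (compCount G.edgeFinset : ℝ) := by
      have : (compCount G.edgeFinset : ℝ) < (Fintype.card V : ℝ) := by exact_mod_cast hcE_lt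
      linarith
    constructor
    · intro hUD A hA
      set B := G.edgeFinset \ A with hB
      have hBne : B.Nonempty := by
        rw [hB, Finset.sdiff_nonempty]
        exact fun h => hA.not_subset h
      have hBsub : B ⊆ G.edgeFinset := Finset.sdiff_subset
      have h1 := hUD B hBsub hBne
      have hcB_lt : compCount B < Fintype.card V := compCount_lt_of_nonempty hBsub hBne
      have hcE_le_cB : compCount G.edgeFinset ≤ compCount B := compCount_mono hBsub
      have hrkB : (rkE B : ℝ) = (Fintype.card V : ℝ) - (compCount B : ℝ) := by
        rw [rkE, Nat.cast_sub hcB_lt.le]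
      have hrBpos : (0:ℝ) < (Fintype.card V : ℝ) - (compCount B : ℝ) := by
        have : (compCount B : ℝ) < (Fintype.card V : ℝ) := by exact_mod_cast hcB_lt
        linarith
      have hbcard : (B.card : ℝ) = (G.edgeFinset.card : ℝ) - (A.card : ℝ) := by
        rw [hB, Finset.card_sdiff_of_subset hA.subset, Nat.cast_sub (Finset.card_le_card hA.subset)]
      rw [hrkB, hrkE, div_le_div_iff₀ hrBpos hrpos] at h1
      rw [le_div_iff₀ hmpos] at *
      nlinarith [h1, hbcard, hcE_le_cB]
    · intro h B hBsub hBne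
      set A := G.edgeFinset \ B with hA
      have hAss : A ⊂ G.edgeFinset := Finset.sdiff_ssubset hBsub hBne
      have h1 := h A hAss
      have hBeq : G.edgeFinset \ A = B := Finset.sdiff_sdiff_eq_self hBsub
      rw [hBeq] at h1
      have hcB_lt : compCount B < Fintype.card V := compCount_lt_of_nonempty hBsub hBne
      have hcE_le_cB : compCount G.edgeFinset ≤ compCount B := compCount_mono hBsub
      have hrkB : (rkE B : ℝ) = (Fintype.card V : ℝ) - (compCount B : ℝ) := by
        rw [rkE, Nat.cast_sub hcB_lt.le]
      have hrBpos : (0:ℝ) < (Fintype.card V : ℝ) - (compCount B : ℝ) := by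
        have : (compCount B : ℝ) < (Fintype.card V : ℝ) := by exact_mod_cast hcB_lt
        linarith
      have hacard : (A.card : ℝ) = (G.edgeFinset.card : ℝ) - (B.card : ℝ) := by
        rw [hA, Finset.card_sdiff_of_subset hBsub, Nat.cast_sub (Finset.card_le_card hBsub)]
      rw [hrkB, hrkE, div_le_div_iff₀ hrBpos hrpos]
      rw [le_div_iff₀ hmpos] at h1
      nlinarith [h1, hacard, hcE_le_cB]
end

section
/- Every uniformly dense graph G is (ρ(G)/Δ(G))-tough: for every vertex subset U ⊆ V whose removal increases the number of connected components, the number of new components is at most (Δ(G)/ρ(G))·|U|. -/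
open Finset

variable {V : Type*} [Fintype V] [DecidableEq V]

/-- Number of connected components after deleting the vertex set `U` from `G`. -/
noncomputable def remComp (G : SimpleGraph V) (U : Finset V) : ℕ :=
  Nat.card (G.induce ((↑U : Set V)ᶜ)).ConnectedComponent

/-- Number of connected components is at most the number of vertices. -/
lemma compCount_le {W : Type*} [Finite W] (H : SimpleGraph W) :
    Nat.card H.ConnectedComponent ≤ Nat.card W :=
  Nat.card_le_card_of_surjective H.connectedComponentMk
    (fun c => c.ind (fun v => ⟨v, rfl⟩))

/-- If there is an edge, the number of components is strictly less than the number of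
vertices. -/
lemma compCount_lt {W : Type*} [Finite W] {H : SimpleGraph W} {u v : W} (h : H.Adj u v) :
    Nat.card H.ConnectedComponent < Nat.card W := by
  classical
  letI : Fintype W := Fintype.ofFinite W
  letI : Fintype H.ConnectedComponent := Fintype.ofFinite _
  rw [Nat.card_eq_fintype_card, Nat.card_eq_fintype_card]
  apply Fintype.card_lt_of_surjective_not_injective H.connectedComponentMk
    (fun c => c.ind (fun v => ⟨v, rfl⟩))
  intro hinj
  exact h.ne (hinj (SimpleGraph.ConnectedComponent.sound h.reachable))

/-- A uniformly dense graph is `(ρ(G)/Δ(G))`-tough: if removing `U` increases the number of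
components, the number of new components is at most `(Δ(G)/ρ(G))·|U|`. -/
theorem uniformlyDense_tough (G : SimpleGraph V) [Fintype G.edgeSet] [DecidableRel G.Adj]
    (hUD : graphUD G) :
    ∀ U : Finset V, compCount G.edgeFinset < remComp G U →
      (remComp G U : ℝ) - (compCount G.edgeFinset : ℝ) ≤
        ((G.maxDegree : ℝ) / ((G.edgeFinset.card : ℝ) / (rkE G.edgeFinset : ℝ))) *
          (U.card : ℝ) := by
  classical
  intro U hU
  set n := Fintype.card V with hn
  set E := G.edgeFinset with hE
  -- the edge set E is nonempty
  have hEne : E.Nonempty := by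
    by_contra hcon
    rw [not_nonempty_iff_eq_empty] at hcon
    -- then the graph fromEdgeSet E is ⊥, so compCount E = n, but remComp ≤ |Uᶜ| ≤ n
    have h1 : (n : ℕ) ≤ compCount E := by
      have hinj : Function.Injective
          (SimpleGraph.fromEdgeSet (↑E : Set (Sym2 V))).connectedComponentMk := by
        intro a b hab
        have := (SimpleGraph.ConnectedComponent.eq.mp hab)
        rw [hcon] at this
        simpa using (SimpleGraph.reachable_bot).mp (by simpa using this)
      simpa [compCount] using Nat.card_le_card_of_injective _ hinj
    have h2 : remComp G U ≤ n := by
      have := compCount_le (G.induce ((↑U : Set V)ᶜ))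
      calc remComp G U ≤ Nat.card ((↑U : Set V)ᶜ : Set V) := this
        _ ≤ Nat.card V := Nat.card_le_card_of_injective Subtype.val Subtype.val_injective
        _ = n := Nat.card_eq_fintype_card
    omega
  obtain ⟨e₀, he₀⟩ := hEne
  -- fromEdgeSet E has an edge, hence compCount E < n
  have he₀' : e₀ ∈ G.edgeSet := by rwa [← SimpleGraph.mem_edgeFinset]
  have hcElt : compCount E < n := by
    induction e₀ using Sym2.ind with
    | _ x y =>
      have hxy : G.Adj x y := (SimpleGraph.mem_edgeSet G).mp he₀'
      have : (SimpleGraph.fromEdgeSet (↑E : Set (Sym2 V))).Adj x y := by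
        rw [SimpleGraph.fromEdgeSet_adj]
        exact ⟨by exact_mod_cast he₀, hxy.ne⟩
      simpa [compCount, hn] using compCount_lt this
  -- the edge set B of edges avoiding U
  set B : Finset (Sym2 V) := E.filter (fun e => ∀ x ∈ e, x ∉ U) with hB
  have hBE : B ⊆ E := filter_subset _ _
  -- components of fromEdgeSet B is at least remComp G U
  have hrem : remComp G U ≤ compCount B := by
    have hadj : ∀ a b : ((↑U : Set V)ᶜ : Set V), (G.induce ((↑U : Set V)ᶜ)).Adj a b →
        (SimpleGraph.fromEdgeSet (↑B : Set (Sym2 V))).Adj a.val b.val := by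
      intro a b hab
      have hab' : G.Adj a.val b.val := hab
      rw [SimpleGraph.fromEdgeSet_adj]
      refine ⟨?_, hab'.ne⟩
      simp only [Finset.coe_filter, Set.mem_setOf_eq, hB]
      refine ⟨by rwa [SimpleGraph.mem_edgeFinset, SimpleGraph.mem_edgeSet], ?_⟩
      intro x hx
      rcases Sym2.mem_iff.mp hx with rfl | rfl
      · exact a.prop
      · exact b.prop
    let φ : G.induce ((↑U : Set V)ᶜ) →g SimpleGraph.fromEdgeSet (↑B : Set (Sym2 V)) :=
      ⟨Subtype.val, fun h => hadj _ _ h⟩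
    have key : ∀ {u v : V} (_ : (SimpleGraph.fromEdgeSet (↑B : Set (Sym2 V))).Walk u v)
        (hu : u ∈ ((↑U : Set V)ᶜ : Set V)), ∃ hv : v ∈ ((↑U : Set V)ᶜ : Set V),
        (G.induce ((↑U : Set V)ᶜ)).Reachable ⟨u, hu⟩ ⟨v, hv⟩ := by
      intro u v w
      induction w with
      | nil => intro hu; exact ⟨hu, SimpleGraph.Reachable.refl _⟩
      | cons h p ih =>
        rename_i x y z
        intro hu
        rw [SimpleGraph.fromEdgeSet_adj] at h
        obtain ⟨hmem, hne⟩ := h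
        simp only [Finset.coe_filter, Set.mem_setOf_eq, hB] at hmem
        obtain ⟨hmemE, hnotU⟩ := hmem
        have hGadj : G.Adj x y := by
          rw [← SimpleGraph.mem_edgeSet, ← SimpleGraph.mem_edgeFinset]; exact hmemE
        have hw : y ∈ ((↑U : Set V)ᶜ : Set V) := by
          simpa using hnotU _ (Sym2.mem_mk_right _ _)
        obtain ⟨hv, hr⟩ := ih hw
        refine ⟨hv, SimpleGraph.Reachable.trans ?_ hr⟩
        exact SimpleGraph.Adj.reachable (by exact hGadj)
    have hinj : Function.Injective (SimpleGraph.ConnectedComponent.map φ) := by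
      intro c d hcd
      induction c using SimpleGraph.ConnectedComponent.ind with
      | _ a =>
      induction d using SimpleGraph.ConnectedComponent.ind with
      | _ b =>
      simp only [SimpleGraph.ConnectedComponent.map_mk] at hcd
      have hreach := SimpleGraph.ConnectedComponent.eq.mp hcd
      obtain ⟨w⟩ := hreach
      obtain ⟨hv, hr⟩ := key w a.prop
      apply SimpleGraph.ConnectedComponent.sound
      exact hr
    exact Nat.card_le_card_of_injective _ hinj
  -- counting edges incident to U
  have hcard : E.card - B.card ≤ G.maxDegree * U.card := by
    have hsub : E \ B ⊆ U.biUnion (fun u => G.incidenceFinset u) := by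
      intro e he
      rw [mem_sdiff] at he
      obtain ⟨heE, heB⟩ := he
      rw [hB, mem_filter] at heB
      push_neg at heB
      obtain ⟨x, hx, hxU⟩ := heB heE
      rw [mem_biUnion]
      refine ⟨x, hxU, ?_⟩
      rw [SimpleGraph.mem_incidenceFinset]
      exact ⟨by rwa [← SimpleGraph.mem_edgeFinset], hx⟩
    calc E.card - B.card = (E \ B).card := (card_sdiff_of_subset hBE).symm
      _ ≤ (U.biUnion (fun u => G.incidenceFinset u)).card := card_le_card hsub
      _ ≤ ∑ u ∈ U, (G.incidenceFinset u).card := card_biUnion_le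
      _ ≤ ∑ u ∈ U, G.maxDegree := by
          apply Finset.sum_le_sum
          intro u _
          rw [SimpleGraph.card_incidenceFinset_eq_degree]
          exact G.degree_le_maxDegree u
      _ = G.maxDegree * U.card := by rw [Finset.sum_const, smul_eq_mul, mul_comm]
  -- real number bookkeeping
  have hcEn : compCount E ≤ n := by
    simpa [compCount, hn] using compCount_le (SimpleGraph.fromEdgeSet (↑E : Set (Sym2 V)))
  have hcBn : compCount B ≤ n := by
    simpa [compCount, hn] using compCount_le (SimpleGraph.fromEdgeSet (↑B : Set (Sym2 V)))
  have hrE : (rkE E : ℝ) = (n : ℝ) - (compCount E : ℝ) := by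
    rw [rkE, ← hn]; push_cast [Nat.cast_sub hcEn]; ring
  have hrB : (rkE B : ℝ) = (n : ℝ) - (compCount B : ℝ) := by
    rw [rkE, ← hn]; push_cast [Nat.cast_sub hcBn]; ring
  have hrEpos : (0 : ℝ) < (rkE E : ℝ) := by
    rw [hrE]
    have : (compCount E : ℝ) < (n : ℝ) := by exact_mod_cast hcElt
    linarith
  have hEpos : (0 : ℝ) < (E.card : ℝ) := by
    have := card_pos.mpr ⟨e₀, he₀⟩
    exact_mod_cast this
  set ρ : ℝ := (E.card : ℝ) / (rkE E : ℝ) with hρ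
  have hρpos : (0 : ℝ) < ρ := div_pos hEpos hrEpos
  have hρrE : ρ * (rkE E : ℝ) = (E.card : ℝ) := div_mul_cancel₀ _ (ne_of_gt hrEpos)
  -- uniform density applied to B
  have hBbound : (B.card : ℝ) ≤ ρ * (rkE B : ℝ) := by
    rcases B.eq_empty_or_nonempty with hBe | hBne
    · rw [hBe]
      simp only [card_empty, Nat.cast_zero]
      positivity
    · have hud := hUD B hBE hBne
      have hrBpos : (0 : ℝ) < (rkE B : ℝ) := by
        obtain ⟨f₀, hf₀⟩ := hBne
        have hf₀E : f₀ ∈ G.edgeSet := by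
          rw [← SimpleGraph.mem_edgeFinset]; exact hBE hf₀
        rw [hrB]
        have : compCount B < n := by
          induction f₀ using Sym2.ind with
          | _ x y =>
            have hxy : G.Adj x y := (SimpleGraph.mem_edgeSet G).mp hf₀E
            have : (SimpleGraph.fromEdgeSet (↑B : Set (Sym2 V))).Adj x y := by
              rw [SimpleGraph.fromEdgeSet_adj]
              exact ⟨by exact_mod_cast hf₀, hxy.ne⟩
            simpa [compCount, hn] using compCount_lt this
        have : (compCount B : ℝ) < (n : ℝ) := by exact_mod_cast this
        linarith
      rw [div_le_div_iff₀ hrBpos hrEpos] at hud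
      rw [hρ, div_mul_eq_mul_div, le_div_iff₀ hrEpos]
      linarith [hud]
  -- putting it together: ρ * (compCount B - compCount E) ≤ E.card - B.card ≤ Δ |U|
  have hEB : (E.card : ℝ) - (B.card : ℝ) ≤ (G.maxDegree : ℝ) * (U.card : ℝ) := by
    have hBcard : B.card ≤ E.card := card_le_card hBE
    have : ((E.card - B.card : ℕ) : ℝ) ≤ ((G.maxDegree * U.card : ℕ) : ℝ) := by
      exact_mod_cast hcard
    rw [Nat.cast_sub hBcard] at this
    push_cast at this
    linarith
  have hmain : ρ * ((remComp G U : ℝ) - (compCount E : ℝ)) ≤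
      (G.maxDegree : ℝ) * (U.card : ℝ) := by
    have h1 : (remComp G U : ℝ) ≤ (compCount B : ℝ) := by exact_mod_cast hrem
    have h2 : ρ * ((compCount B : ℝ) - (compCount E : ℝ)) =
        ρ * (rkE E : ℝ) - ρ * (rkE B : ℝ) := by rw [hrE, hrB]; ring
    nlinarith [hρpos, hBbound, hρrE, hEB]
  rw [div_mul_eq_mul_div, le_div_iff₀ hρpos]
  nlinarith [hmain]
end

section
/- Every connected, regular, uniformly dense graph G is 1-tough: for every subset U of vertices whose removal disconnects G, the resulting graph has at most |U| connected components. -/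
open Finset

variable {V : Type*} [Fintype V] [DecidableEq V]

private lemma walk_const' {α : Type*} {β : Sort*} {G : SimpleGraph α} {f : α → β}
    (h : ∀ x y, G.Adj x y → f x = f y) :
    ∀ (v w : α), G.Walk v w → f v = f w := by
  intro v w p
  induction p with
  | nil => rfl
  | cons ha _ ih => exact (h _ _ ha).trans ih

private lemma walk_const {α : Type*} {β : Sort*} {G : SimpleGraph α} {f : α → β}
    (h : ∀ x y, G.Adj x y → f x = f y) :
    ∀ (v w : α) (p : G.Walk v w), p.IsPath → f v = f w :=
  fun v w p _ => walk_const' h v w p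

private lemma compCount_le_s13 (A : Finset (Sym2 V)) : compCount A ≤ Fintype.card V := by
  have := Nat.card_le_card_of_surjective
    (SimpleGraph.fromEdgeSet (↑A : Set (Sym2 V))).connectedComponentMk
    Quot.mk_surjective
  simpa [compCount, Nat.card_eq_fintype_card] using this

private lemma compCount_connected (G : SimpleGraph V) [Fintype G.edgeSet]
    (hconn : G.Connected) : compCount G.edgeFinset = 1 := by
  unfold compCount
  rw [SimpleGraph.coe_edgeFinset, SimpleGraph.fromEdgeSet_edgeSet]
  rw [Nat.card_eq_one_iff_unique]
  exact ⟨hconn.preconnected.subsingleton_connectedComponent,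
    Nonempty.map G.connectedComponentMk hconn.nonempty⟩

section Inside

variable (G : SimpleGraph V) [Fintype G.edgeSet] [DecidableRel G.Adj] (U : Finset V)

/-- Edges of `G` avoiding `U`. -/
private def insideEdges : Finset (Sym2 V) :=
  G.edgeFinset.filter (fun e => ∀ v ∈ e, v ∉ U)

private lemma insideEdges_subset : insideEdges G U ⊆ G.edgeFinset :=
  Finset.filter_subset _ _

private lemma insideEdges_adj (x y : V) :
    (SimpleGraph.fromEdgeSet (↑(insideEdges G U) : Set (Sym2 V))).Adj x y ↔
      G.Adj x y ∧ x ∉ U ∧ y ∉ U := by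
  rw [SimpleGraph.fromEdgeSet_adj]
  constructor
  · rintro ⟨hmem, -⟩
    rw [Finset.mem_coe, insideEdges, Finset.mem_filter] at hmem
    exact ⟨by simpa using hmem.1, hmem.2 x (by simp), hmem.2 y (by simp)⟩
  · rintro ⟨ha, hx, hy⟩
    refine ⟨?_, ha.ne⟩
    rw [Finset.mem_coe, insideEdges, Finset.mem_filter]
    refine ⟨by simpa using ha, ?_⟩
    intro v hv
    rw [Sym2.mem_iff] at hv
    rcases hv with rfl | rfl
    · exact hx
    · exact hy

private lemma compCount_insideEdges :
    compCount (insideEdges G U) = remComp G U + U.card := by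
  classical
  set H := SimpleGraph.fromEdgeSet (↑(insideEdges G U) : Set (Sym2 V)) with hHdef
  set G' := G.induce ((↑U : Set V)ᶜ) with hG'def
  have hmemc : ∀ {v : V}, v ∉ U → v ∈ ((↑U : Set V)ᶜ) := fun {v} h => by
    simp only [Set.mem_compl_iff, Finset.mem_coe]; exact h
  have hnot : ∀ a : {x : V // x ∈ ((↑U : Set V)ᶜ)}, a.1 ∉ U := fun a h =>
    a.2 (Finset.mem_coe.mpr h)
  set f : V → G'.ConnectedComponent ⊕ {x // x ∈ U} := fun v =>
    if h : v ∈ U then Sum.inr ⟨v, h⟩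
    else Sum.inl (G'.connectedComponentMk ⟨v, hmemc h⟩) with hfdef
  have hf : ∀ x y, H.Adj x y → f x = f y := by
    intro x y hxy
    rw [hHdef, insideEdges_adj] at hxy
    obtain ⟨ha, hx, hy⟩ := hxy
    have hadj : G'.Adj ⟨x, hmemc hx⟩ ⟨y, hmemc hy⟩ := ha
    simp only [hfdef, dif_neg hx, dif_neg hy]
    exact congrArg Sum.inl (SimpleGraph.ConnectedComponent.connectedComponentMk_eq_of_adj hadj)
  set F : H.ConnectedComponent → G'.ConnectedComponent ⊕ {x // x ∈ U} :=
    SimpleGraph.ConnectedComponent.lift f (walk_const hf) with hFdef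
  have hg : ∀ a b : {x : V // x ∈ ((↑U : Set V)ᶜ)}, G'.Adj a b →
      H.connectedComponentMk a.1 = H.connectedComponentMk b.1 := by
    intro a b hab
    have hA : G.Adj a.1 b.1 := hab
    have : H.Adj a.1 b.1 := by
      rw [hHdef, insideEdges_adj]
      exact ⟨hA, hnot a, hnot b⟩
    exact SimpleGraph.ConnectedComponent.connectedComponentMk_eq_of_adj this
  set gl : G'.ConnectedComponent → H.ConnectedComponent :=
    SimpleGraph.ConnectedComponent.lift (fun a => H.connectedComponentMk a.1)
      (walk_const hg) with hgldef
  set g : G'.ConnectedComponent ⊕ {x // x ∈ U} → H.ConnectedComponent :=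
    Sum.elim gl (fun u => H.connectedComponentMk u.1) with hgdef
  have e : H.ConnectedComponent ≃ (G'.ConnectedComponent ⊕ {x // x ∈ U}) := by
    refine ⟨F, g, ?_, ?_⟩
    · intro c
      refine SimpleGraph.ConnectedComponent.ind (fun v => ?_) c
      by_cases h : v ∈ U
      · simp [hFdef, hgdef, hfdef, dif_pos h]
      · simp [hFdef, hgdef, hfdef, dif_neg h, hgldef]
    · intro s
      cases s with
      | inl c =>
        refine SimpleGraph.ConnectedComponent.ind (fun a => ?_) c
        have ha : a.1 ∉ U := hnot a
        have hsub : (⟨a.1, hmemc ha⟩ : {x : V // x ∈ ((↑U : Set V)ᶜ)}) = a := Subtype.ext rfl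
        simp only [hgdef, hgldef, Sum.elim_inl, SimpleGraph.ConnectedComponent.lift_mk,
          hFdef, hfdef, dif_neg ha, hsub]
      | inr u =>
        simp [hgdef, hFdef, hfdef, dif_pos u.2]
  have hcard : Nat.card H.ConnectedComponent =
      Nat.card G'.ConnectedComponent + Nat.card {x // x ∈ U} := by
    rw [Nat.card_congr e, Nat.card_sum]
  rw [compCount, ← hHdef, hcard, remComp, ← hG'def]
  congr 1
  rw [Nat.card_eq_fintype_card, Fintype.card_coe]

private lemma compCount_insideEdges_lt (hne : (insideEdges G U).Nonempty) :
    compCount (insideEdges G U) < Fintype.card V := by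
  classical
  set H := SimpleGraph.fromEdgeSet (↑(insideEdges G U) : Set (Sym2 V)) with hHdef
  obtain ⟨e, he⟩ := hne
  obtain ⟨x, y, he⟩ : ∃ x y, s(x, y) ∈ insideEdges G U :=
    Sym2.ind (fun x y h => ⟨x, y, h⟩) e he
  have hxy : H.Adj x y := by
    rw [hHdef, SimpleGraph.fromEdgeSet_adj]
    refine ⟨he, ?_⟩
    have hG : G.Adj x y := by
      have := (Finset.mem_filter.mp he).1
      simpa using this
    exact hG.ne
  haveI : DecidableRel H.Adj := fun a b =>
    decidable_of_iff _ (insideEdges_adj G U a b).symm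
  have hlt : Fintype.card H.ConnectedComponent < Fintype.card V := by
    refine Fintype.card_lt_of_surjective_not_injective H.connectedComponentMk
      Quot.mk_surjective ?_
    intro hinj
    exact hxy.ne (hinj (SimpleGraph.ConnectedComponent.connectedComponentMk_eq_of_adj hxy))
  calc compCount (insideEdges G U) = Fintype.card H.ConnectedComponent := by
        rw [compCount, ← hHdef, Nat.card_eq_fintype_card]
    _ < Fintype.card V := hlt

private lemma card_le_insideEdges :
    G.edgeFinset.card ≤ (insideEdges G U).card + ∑ v ∈ U, G.degree v := by
  classical
  have hsub : G.edgeFinset ⊆ insideEdges G U ∪ U.biUnion (fun v => G.incidenceFinset v) := by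
    intro e he
    by_cases hA : e ∈ insideEdges G U
    · exact Finset.mem_union_left _ hA
    · refine Finset.mem_union_right _ ?_
      rw [insideEdges, Finset.mem_filter] at hA
      push_neg at hA
      obtain ⟨v, hv, hvU⟩ := hA he
      refine Finset.mem_biUnion.mpr ⟨v, hvU, ?_⟩
      rw [SimpleGraph.mem_incidenceFinset]
      exact ⟨SimpleGraph.mem_edgeFinset.mp he, hv⟩
  calc G.edgeFinset.card ≤ (insideEdges G U ∪ U.biUnion (fun v => G.incidenceFinset v)).card :=
        Finset.card_le_card hsub
    _ ≤ (insideEdges G U).card + (U.biUnion (fun v => G.incidenceFinset v)).card :=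
        Finset.card_union_le _ _
    _ ≤ (insideEdges G U).card + ∑ v ∈ U, (G.incidenceFinset v).card := by
        gcongr
        exact Finset.card_biUnion_le
    _ = (insideEdges G U).card + ∑ v ∈ U, G.degree v := by
        simp [SimpleGraph.card_incidenceFinset_eq_degree]

end Inside

set_option maxHeartbeats 1000000 in
/-- A connected, regular, uniformly dense graph is `1`-tough: whenever removing a vertex set
`U` disconnects the graph, at most `|U|` components remain. -/
theorem connected_regular_uniformlyDense_one_tough (G : SimpleGraph V) [Fintype G.edgeSet]
    [DecidableRel G.Adj] (hconn : G.Connected) (d : ℕ) (hreg : G.IsRegularOfDegree d)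
    (hUD : graphUD G) :
    ∀ U : Finset V, 2 ≤ remComp G U → remComp G U ≤ U.card := by
  classical
  intro U hc2
  have hcu : compCount (insideEdges G U) = remComp G U + U.card := compCount_insideEdges G U
  set n := Fintype.card V with hn
  set c := remComp G U with hc
  set u := U.card with hu
  set m := G.edgeFinset.card with hm
  set a := (insideEdges G U).card with ha
  have hcu_le : c + u ≤ n := by rw [← hcu]; exact compCount_le_s13 _
  have hmd : n * d = 2 * m := by
    have h2 := G.sum_degrees_eq_twice_card_edges
    rw [Finset.sum_congr rfl fun v _ => hreg v, Finset.sum_const, smul_eq_mul,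
      Finset.card_univ, Subsingleton.elim G.fintypeEdgeSet ‹Fintype G.edgeSet›] at h2
    rw [hn, hm]
    exact h2
  have hm_le : m ≤ a + d * u := by
    have h3 := card_le_insideEdges G U
    rw [Finset.sum_congr rfl fun v _ => hreg v, Finset.sum_const, smul_eq_mul] at h3
    rw [hm, ha, hu, mul_comm d U.card]
    exact h3
  -- degree is positive
  have hn2 : 2 ≤ n := le_trans (by omega) hcu_le
  have hd0 : 0 < d := by
    obtain ⟨v, w, hvw⟩ := Fintype.exists_pair_of_one_lt_card (by omega : 1 < Fintype.card V)
    obtain ⟨p⟩ := hconn.preconnected v w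
    cases p with
    | nil => exact absurd rfl hvw
    | cons hadj _ =>
      have : 0 < G.degree v := (G.degree_pos_iff_exists_adj v).mpr ⟨_, hadj⟩
      rwa [hreg v] at this
  by_cases hAne : (insideEdges G U).Nonempty
  · -- main case: apply uniform density to the inside edges
    have hlt : c + u < n := by rw [← hcu]; exact compCount_insideEdges_lt G U hAne
    have hrkA : rkE (insideEdges G U) = n - (c + u) := by
      rw [rkE, hcu, hn]
    have hrkEfull : rkE G.edgeFinset = n - 1 := by
      rw [rkE, compCount_connected G hconn, hn]
    have h1 := hUD _ (insideEdges_subset G U) hAne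
    rw [hrkA, hrkEfull, ← ha, ← hm] at h1
    have hrk0 : (0 : ℝ) < ((n - (c + u) : ℕ) : ℝ) := by
      exact_mod_cast Nat.sub_pos_of_lt hlt
    have hn1 : (0 : ℝ) < ((n - 1 : ℕ) : ℝ) := by
      exact_mod_cast Nat.sub_pos_of_lt (by omega : 1 < n)
    have hr1 : (a : ℝ) * ((n : ℝ) - 1) ≤ (m : ℝ) * ((n : ℝ) - ((c : ℝ) + u)) := by
      have := (div_le_div_iff₀ hrk0 hn1).mp h1
      rw [Nat.cast_sub (by omega : 1 ≤ n), Nat.cast_sub hcu_le] at this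
      push_cast at this ⊢
      linarith
    have hr2 : (m : ℝ) ≤ (a : ℝ) + (d : ℝ) * u := by exact_mod_cast hm_le
    have hr3 : (n : ℝ) * d = 2 * m := by exact_mod_cast hmd
    have hn0 : (0 : ℝ) ≤ (n : ℝ) := by positivity
    have hu0 : (0 : ℝ) ≤ (u : ℝ) := by positivity
    have hrd0 : (0 : ℝ) < (d : ℝ) := by exact_mod_cast hd0
    have hrc2 : (2 : ℝ) ≤ (c : ℝ) := by exact_mod_cast hc2
    have hrn2 : (2 : ℝ) ≤ (n : ℝ) := by exact_mod_cast hn2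
    by_contra hcon
    have hr7 : (u : ℝ) + 1 ≤ (c : ℝ) := by exact_mod_cast (by omega : u + 1 ≤ c)
    have hr2m : (m : ℝ) * ((n : ℝ) - 1) ≤ ((a : ℝ) + (d : ℝ) * u) * ((n : ℝ) - 1) :=
      mul_le_mul_of_nonneg_right hr2 (by linarith)
    have step1 : (m : ℝ) * ((c : ℝ) + u - 1) ≤ (d : ℝ) * u * ((n : ℝ) - 1) := by
      nlinarith [hr1, hr2m]
    have step2 : (n : ℝ) * d * ((c : ℝ) + u - 1) ≤ 2 * ((d : ℝ) * u * ((n : ℝ) - 1)) := by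
      have e1 : (n : ℝ) * d * ((c : ℝ) + u - 1) = 2 * (m : ℝ) * ((c : ℝ) + u - 1) := by
        rw [hr3]
      rw [e1]
      nlinarith [step1]
    have H : (n : ℝ) * ((c : ℝ) + u - 1) ≤ 2 * u * ((n : ℝ) - 1) := by
      have h' : (d : ℝ) * ((n : ℝ) * ((c : ℝ) + u - 1)) ≤
          (d : ℝ) * (2 * u * ((n : ℝ) - 1)) := by nlinarith [step2]
      exact le_of_mul_le_mul_left h' hrd0
    have hP1 : ((u : ℝ) + 1) * (n : ℝ) ≤ (c : ℝ) * n :=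
      mul_le_mul_of_nonneg_right hr7 hn0
    have hu_le : (u : ℝ) ≤ 0 := by nlinarith [H, hP1]
    have hu_eq : (u : ℝ) = 0 := le_antisymm hu_le hu0
    rw [hu_eq] at H
    have hP2 : (n : ℝ) * 1 ≤ (n : ℝ) * ((c : ℝ) - 1) :=
      mul_le_mul_of_nonneg_left (by linarith) hn0
    nlinarith [H, hP2]
  · -- no edges avoid U
    rw [Finset.not_nonempty_iff_eq_empty] at hAne
    have ha0 : a = 0 := by rw [ha, hAne]; rfl
    have hnd : n * d ≤ (2 * u) * d := by
      calc n * d = 2 * m := hmd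
        _ ≤ 2 * (a + d * u) := by omega
        _ = (2 * u) * d := by rw [ha0]; ring
    have hn_le : n ≤ 2 * u := Nat.le_of_mul_le_mul_right hnd hd0
    omega
end

section
/- Let T be an n × n real orthogonal projection matrix (T symmetric, T² = T) of rank k. Then Σ_{S ∈ C(n,k)} det(T_{SS}) · e_S divided by Σ_{S ∈ C(n,k)} det(T_{SS}) equals the diagonal of T; i.e., for each i, Σ_{S ∋ i} det(T_{SS}) = T_{ii} · Σ_S det(T_{SS}), where S ranges over all k-element subsets of [n] and T_{SS} is the principal submatrix indexed by S. -/
open Finset Matrix Equiv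

namespace ProjHelper

variable {n k : ℕ}

/-- The `k × k` minor of an `n × k` matrix given by selecting the rows in `S`. -/
noncomputable def colMinor (V : Matrix (Fin n) (Fin k) ℝ) (S : Finset (Fin n)) : ℝ :=
  if h : S.card = k then (V.submatrix (fun a => S.orderEmbOfFin h a) id).det else 0

lemma image_emb (S : Finset (Fin n)) (h : S.card = k) (σ : Equiv.Perm (Fin k)) :
    Finset.image (fun a => S.orderEmbOfFin h (σ a)) Finset.univ = S := by
  apply Finset.eq_of_subset_of_card_le
  · intro x hx
    simp only [Finset.mem_image] at hx
    obtain ⟨a, -, rfl⟩ := hx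
    exact S.orderEmbOfFin_mem h _
  · have hinj : Function.Injective (fun a => S.orderEmbOfFin h (σ a)) :=
      fun a b hab => σ.injective ((S.orderEmbOfFin h).injective hab)
    rw [Finset.card_image_of_injective _ hinj]
    simp [h]

lemma cauchyBinet (V W : Matrix (Fin n) (Fin k) ℝ) (w : Fin n → ℝ) :
    (Vᵀ * Matrix.diagonal w * W).det =
      ∑ S ∈ Finset.powersetCard k (Finset.univ : Finset (Fin n)),
        (∏ j ∈ S, w j) * (colMinor V S * colMinor W S) := by
  classical
  set ε : Equiv.Perm (Fin k) → ℝ := fun σ => (((Equiv.Perm.sign σ : ℤˣ) : ℤ) : ℝ) with hε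
  -- Phase 1: expand into a sum over functions `f : Fin k → Fin n`.
  have phase1 : (Vᵀ * Matrix.diagonal w * W).det =
      ∑ f : Fin k → Fin n, (∏ b, w (f b) * W (f b) b) *
        (Matrix.of fun a b => V (f a) b).det := by
    have entry : ∀ a b, (Vᵀ * Matrix.diagonal w * W) a b =
        ∑ j, (w j * W j b) * V j a := by
      intro a b
      rw [Matrix.mul_apply]
      refine Finset.sum_congr rfl fun j _ => ?_
      rw [Matrix.mul_diagonal, Matrix.transpose_apply]; ring
    calc (Vᵀ * Matrix.diagonal w * W).det
        = ∑ σ : Perm (Fin k), ε σ *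
            ∏ b, ∑ j, (w j * W j b) * V j (σ b) := by
          rw [Matrix.det_apply']
          exact Finset.sum_congr rfl fun σ _ => by
            rw [Finset.prod_congr rfl fun b _ => entry (σ b) b]
      _ = ∑ σ : Perm (Fin k), ∑ f : Fin k → Fin n, ε σ *
            ∏ b, (w (f b) * W (f b) b) * V (f b) (σ b) := by
          refine Finset.sum_congr rfl fun σ _ => ?_
          rw [Finset.prod_univ_sum, Fintype.piFinset_univ, Finset.mul_sum]
      _ = ∑ f : Fin k → Fin n, ∑ σ : Perm (Fin k), ε σ *
            ∏ b, (w (f b) * W (f b) b) * V (f b) (σ b) := Finset.sum_comm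
      _ = ∑ f : Fin k → Fin n, (∏ b, w (f b) * W (f b) b) *
            ∑ σ : Perm (Fin k), ε σ * ∏ b, V (f b) (σ b) := by
          refine Finset.sum_congr rfl fun f _ => ?_
          rw [Finset.mul_sum]
          refine Finset.sum_congr rfl fun σ _ => ?_
          rw [Finset.prod_mul_distrib]; ring
      _ = ∑ f : Fin k → Fin n, (∏ b, w (f b) * W (f b) b) *
            (Matrix.of fun a b => V (f a) b).det := by
          refine Finset.sum_congr rfl fun f _ => ?_
          congr 1
          rw [← Matrix.det_transpose, Matrix.det_apply']
          rfl
  rw [phase1]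
  -- Phase 2: only injective `f` contribute
  rw [show (Finset.univ : Finset (Fin k → Fin n)) =
    Finset.univ.filter (fun f : Fin k → Fin n => Function.Injective f) ∪
    Finset.univ.filter (fun f => ¬ Function.Injective f) from by
      rw [Finset.filter_union_filter_not_eq]]
  rw [Finset.sum_union (Finset.disjoint_filter_filter_not _ _ _)]
  have zero2 : ∑ f ∈ Finset.univ.filter (fun f : Fin k → Fin n => ¬ Function.Injective f),
      (∏ b, w (f b) * W (f b) b) * (Matrix.of fun a b => V (f a) b).det = 0 := by
    refine Finset.sum_eq_zero fun f hf => ?_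
    rw [Finset.mem_filter] at hf
    simp only [Function.Injective] at hf
    push_neg at hf
    obtain ⟨a, b, hab, hne⟩ := hf.2
    rw [Matrix.det_zero_of_row_eq hne (by ext c; simp [hab]), mul_zero]
  rw [zero2, add_zero]
  -- Phase 3: reindex injective functions by pairs (S, σ)
  have phase3 : ∑ f ∈ Finset.univ.filter (fun f : Fin k → Fin n => Function.Injective f),
      (∏ b, w (f b) * W (f b) b) * (Matrix.of fun a b => V (f a) b).det =
      ∑ p ∈ (Finset.powersetCard k (Finset.univ : Finset (Fin n))).attach ×ˢ
          (Finset.univ : Finset (Perm (Fin k))),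
        (∏ b, w (p.1.1.orderEmbOfFin (Finset.mem_powersetCard.mp p.1.2).2 (p.2 b)) *
            W (p.1.1.orderEmbOfFin (Finset.mem_powersetCard.mp p.1.2).2 (p.2 b)) b) *
          (Matrix.of fun a b =>
            V (p.1.1.orderEmbOfFin (Finset.mem_powersetCard.mp p.1.2).2 (p.2 a)) b).det := by
    refine (Finset.sum_bij
      (i := fun p _ => fun a => p.1.1.orderEmbOfFin (Finset.mem_powersetCard.mp p.1.2).2 (p.2 a))
      ?_ ?_ ?_ ?_).symm
    · intro p _
      simp only [Finset.mem_filter, Finset.mem_univ, true_and]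
      exact fun a b hab => p.2.injective ((p.1.1.orderEmbOfFin _).injective hab)
    · intro p1 hp1 p2 hp2 heq
      have himg := congrArg (fun f => Finset.image f Finset.univ) heq
      simp only [image_emb] at himg
      have hS : p1.1 = p2.1 := Subtype.ext himg
      obtain ⟨⟨S1, h1⟩, σ1⟩ := p1
      obtain ⟨⟨S2, h2⟩, σ2⟩ := p2
      simp only at hS
      cases hS
      have hσ : σ1 = σ2 := Equiv.coe_fn_injective
        (funext fun a => (S1.orderEmbOfFin _).injective (congrFun heq a))
      exact Prod.ext (Subtype.ext rfl) hσ
    · intro f hf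
      simp only [Finset.mem_filter, Finset.mem_univ, true_and] at hf
      set S : Finset (Fin n) := Finset.image f Finset.univ with hSdef
      have hcard : S.card = k := by
        rw [Finset.card_image_of_injective _ hf, Finset.card_univ, Fintype.card_fin]
      have hSmem : S ∈ Finset.powersetCard k (Finset.univ : Finset (Fin n)) :=
        Finset.mem_powersetCard.mpr ⟨Finset.subset_univ _, hcard⟩
      have hmem : ∀ a, f a ∈ S := fun a => Finset.mem_image_of_mem f (Finset.mem_univ a)
      let f' : Fin k → S := fun a => ⟨f a, hmem a⟩
      have hf' : Function.Bijective f' := by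
        rw [Fintype.bijective_iff_injective_and_card]
        constructor
        · intro a b hab
          exact hf (congrArg Subtype.val hab)
        · simp [hcard]
      let σ : Perm (Fin k) :=
        (Equiv.ofBijective f' hf').trans (S.orderIsoOfFin hcard).toEquiv.symm
      refine ⟨⟨⟨S, hSmem⟩, σ⟩, Finset.mem_product.mpr ⟨Finset.mem_attach _ _, Finset.mem_univ _⟩, ?_⟩
      funext a
      show (S.orderEmbOfFin _) ((S.orderIsoOfFin hcard).toEquiv.symm (f' a)) = f a
      rw [← Finset.coe_orderIsoOfFin_apply]
      simp
      rfl
    · intro p hp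
      rfl
  rw [phase3, Finset.sum_product, ← Finset.sum_attach (Finset.powersetCard k
    (Finset.univ : Finset (Fin n))) (fun S => (∏ j ∈ S, w j) * (colMinor V S * colMinor W S))]
  -- Phase 4: inner sum over permutations
  refine Finset.sum_congr rfl fun ⟨S, hSmem⟩ _ => ?_
  have hS : S.card = k := (Finset.mem_powersetCard.mp hSmem).2
  set g := S.orderEmbOfFin hS with hg
  have hw : ∀ σ : Perm (Fin k), (∏ b, w (g (σ b))) = ∏ j ∈ S, w j := by
    intro σ
    rw [← image_emb S hS σ, Finset.prod_image
      (fun a _ b _ hab => σ.injective (g.injective hab))]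
  calc ∑ σ : Perm (Fin k),
        (∏ b, w (g (σ b)) * W (g (σ b)) b) * (Matrix.of fun a b => V (g (σ a)) b).det
      = ∑ σ : Perm (Fin k), (∏ j ∈ S, w j) * ((V.submatrix g id).det *
          (ε σ * ∏ b, W (g (σ b)) b)) := by
        refine Finset.sum_congr rfl fun σ _ => ?_
        rw [Finset.prod_mul_distrib, hw σ]
        have hperm : (Matrix.of fun a b => V (g (σ a)) b).det =
            ε σ * (V.submatrix g id).det := by
          have h1 := Matrix.det_permute σ (V.submatrix g id)
          have h2 : (V.submatrix g id).submatrix σ id = Matrix.of fun a b => V (g (σ a)) b := by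
            ext a b; rfl
          rw [h2] at h1
          exact h1
        rw [hperm]; ring
      _ = (∏ j ∈ S, w j) * ((V.submatrix g id).det *
          ∑ σ : Perm (Fin k), ε σ * ∏ b, W (g (σ b)) b) := by
        rw [← Finset.mul_sum, ← Finset.mul_sum]
      _ = (∏ j ∈ S, w j) * (colMinor V S * colMinor W S) := by
        congr 1
        have hdet : ∑ σ : Perm (Fin k), ε σ * ∏ b, W (g (σ b)) b =
            (W.submatrix g id).det := by
          rw [Matrix.det_apply']
          rfl
        rw [hdet, colMinor, colMinor, dif_pos hS, dif_pos hS]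

lemma exists_iso (T : Matrix (Fin n) (Fin n) ℝ) (hsymm : T.IsSymm) (hproj : T * T = T)
    (hrank : T.rank = k) :
    ∃ V : Matrix (Fin n) (Fin k) ℝ, Vᵀ * V = 1 ∧ V * Vᵀ = T := by
  classical
  have hA : T.IsHermitian := by
    rw [Matrix.IsHermitian]
    ext i j
    simp only [Matrix.conjTranspose_apply, star_trivial]
    exact hsymm.apply i j
  set U : Matrix (Fin n) (Fin n) ℝ := (hA.eigenvectorUnitary : Matrix (Fin n) (Fin n) ℝ) with hU
  set lam := hA.eigenvalues with hlam
  have hUU : star U * U = 1 := Unitary.coe_star_mul_self hA.eigenvectorUnitary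
  have hUU' : U * star U = 1 := Unitary.coe_mul_star_self hA.eigenvectorUnitary
  have hfun : (RCLike.ofReal ∘ lam : Fin n → ℝ) = lam := by
    funext j
    simp [RCLike.ofReal_real_eq_id]
  have hspec : T = U * Matrix.diagonal lam * star U := by
    have h := hA.spectral_theorem
    rwa [hfun] at h
  have hdiag : star U * T * U = Matrix.diagonal lam := by
    have h := hA.conjStarAlgAut_star_eigenvectorUnitary
    rwa [hfun] at h
  have hD2 : Matrix.diagonal lam * Matrix.diagonal lam = Matrix.diagonal lam := by
    calc Matrix.diagonal lam * Matrix.diagonal lam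
        = (star U * T * U) * (star U * T * U) := by rw [hdiag]
      _ = star U * (T * (U * star U) * T) * U := by
          simp only [Matrix.mul_assoc]
      _ = star U * (T * T) * U := by rw [hUU']; simp [Matrix.mul_assoc]
      _ = Matrix.diagonal lam := by rw [hproj, hdiag]
  have hlam01 : ∀ j, lam j = 0 ∨ lam j = 1 := by
    intro j
    rw [Matrix.diagonal_mul_diagonal] at hD2
    have hjj := congrFun (Matrix.diagonal_injective hD2) j
    rcases mul_eq_zero.mp (show lam j * (lam j - 1) = 0 by ring_nf; linarith [hjj]) with h | h
    · exact Or.inl h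
    · exact Or.inr (by linarith)
  have hk : Fintype.card {j // lam j ≠ 0} = k := by
    rw [← hA.rank_eq_card_non_zero_eigs, hrank]
  let e : Fin k ≃ {j // lam j ≠ 0} := (Fintype.equivFinOfCardEq hk).symm
  refine ⟨Matrix.of fun i a => U i ((e a) : Fin n), ?_, ?_⟩
  · ext a b
    have h1 := congrFun (congrFun hUU ((e a) : Fin n)) ((e b) : Fin n)
    simp only [Matrix.mul_apply, Matrix.star_apply, star_trivial] at h1
    simp only [Matrix.mul_apply, Matrix.transpose_apply, Matrix.of_apply]
    rw [h1]
    by_cases hab : a = b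
    · subst hab; simp
    · have hne : ((e a) : Fin n) ≠ ((e b) : Fin n) :=
        fun h => hab (e.injective (Subtype.val_injective h))
      simp [Matrix.one_apply, hab, hne]
  · ext i j
    have hrhs : T i j = ∑ c, lam c * (U i c * U j c) := by
      rw [hspec, Matrix.mul_apply]
      refine Finset.sum_congr rfl fun c _ => ?_
      rw [Matrix.mul_diagonal, Matrix.star_apply, star_trivial]
      ring
    rw [hrhs]
    simp only [Matrix.mul_apply, Matrix.transpose_apply, Matrix.of_apply]
    calc ∑ a : Fin k, U i ((e a) : Fin n) * U j ((e a) : Fin n)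
        = ∑ s : {j // lam j ≠ 0}, U i (s : Fin n) * U j (s : Fin n) :=
          Equiv.sum_comp e (fun s : {j // lam j ≠ 0} => U i (s : Fin n) * U j (s : Fin n))
      _ = ∑ c ∈ Finset.univ.filter (fun c => lam c ≠ 0), U i c * U j c := by
          exact (Finset.sum_subtype (p := fun c => lam c ≠ 0)
            (Finset.univ.filter (fun c => lam c ≠ 0))
            (fun c => by simp) (fun c => U i c * U j c)).symm
      _ = ∑ c, lam c * (U i c * U j c) := by
          rw [Finset.sum_filter]
          refine Finset.sum_congr rfl fun c _ => ?_
          rcases hlam01 c with h | h <;> simp [h]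

lemma minor_split (V : Matrix (Fin n) (Fin k) ℝ) (S : Finset (Fin n)) (hS : S.card = k) :
    ((V * Vᵀ).submatrix (fun x : ↥S => (x : Fin n)) (fun x : ↥S => (x : Fin n))).det
      = colMinor V S * colMinor V S := by
  rw [← Matrix.det_submatrix_equiv_self (S.orderIsoOfFin hS).toEquiv, Matrix.submatrix_submatrix]
  have hcomp : ((fun x : ↥S => (x : Fin n)) ∘ (S.orderIsoOfFin hS).toEquiv) =
      fun a => S.orderEmbOfFin hS a := by
    funext a
    exact S.coe_orderIsoOfFin_apply hS a
  rw [hcomp]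
  have hsub : (V * Vᵀ).submatrix (fun a => S.orderEmbOfFin hS a) (fun a => S.orderEmbOfFin hS a)
      = (V.submatrix (fun a => S.orderEmbOfFin hS a) id) *
        (V.submatrix (fun a => S.orderEmbOfFin hS a) id)ᵀ := by
    ext a b
    simp [Matrix.mul_apply]
  rw [hsub, Matrix.det_mul, Matrix.det_transpose, colMinor, dif_pos hS]


end ProjHelper

open ProjHelper in
/-- For an `n × n` real orthogonal projection matrix `T` of rank `k`, the vector of principal
`k`-minors, normalized by their sum, equals the diagonal of `T`:
`Σ_{S ∋ i} det(T_SS) = T_ii · Σ_S det(T_SS)` for each `i`. -/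
theorem projection_principalMinors_diag (n k : ℕ) (T : Matrix (Fin n) (Fin n) ℝ)
    (hsymm : T.IsSymm) (hproj : T * T = T) (hrank : T.rank = k) (i : Fin n) :
    ∑ S ∈ (Finset.powersetCard k (Finset.univ : Finset (Fin n))).filter (fun S => i ∈ S),
        (T.submatrix (fun x : ↥S => (x : Fin n)) (fun x : ↥S => (x : Fin n))).det
      = T i i *
        ∑ S ∈ Finset.powersetCard k (Finset.univ : Finset (Fin n)),
          (T.submatrix (fun x : ↥S => (x : Fin n)) (fun x : ↥S => (x : Fin n))).det := by
  classical
  obtain ⟨V, hVtV, hVVt⟩ := exists_iso T hsymm hproj hrank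
  set pows := Finset.powersetCard k (Finset.univ : Finset (Fin n)) with hpows
  have hdd : ∀ S ∈ pows,
      (T.submatrix (fun x : ↥S => (x : Fin n)) (fun x : ↥S => (x : Fin n))).det
        = colMinor V S * colMinor V S := by
    intro S hS
    rw [← hVVt]
    exact minor_split V S (Finset.mem_powersetCard.mp hS).2
  -- the total sum is 1
  have hden : ∑ S ∈ pows,
      (T.submatrix (fun x : ↥S => (x : Fin n)) (fun x : ↥S => (x : Fin n))).det = 1 := by
    have hcb := cauchyBinet V V (fun _ => 1)
    rw [Matrix.diagonal_one, Matrix.mul_one, hVtV, Matrix.det_one] at hcb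
    rw [Finset.sum_congr rfl hdd, hcb]
    exact Finset.sum_congr rfl fun S _ => by simp
  -- diagonal entry
  have hTii : T i i = ∑ a, V i a * V i a := by
    rw [← hVVt]
    simp [Matrix.mul_apply]
  -- the sum over S not containing i
  have hnum : ∑ S ∈ pows.filter (fun S => ¬ i ∈ S),
      (T.submatrix (fun x : ↥S => (x : Fin n)) (fun x : ↥S => (x : Fin n))).det
        = 1 - T i i := by
    set w : Fin n → ℝ := fun j => if j = i then 0 else 1 with hw
    have hcb := cauchyBinet V V w
    have hmat : Vᵀ * Matrix.diagonal w * V =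
        1 + Matrix.replicateCol Unit (fun a => - V i a) * Matrix.replicateRow Unit (fun a => V i a) := by
      ext a b
      have hLHS : (Vᵀ * Matrix.diagonal w * V) a b = ∑ j, (w j * V j b) * V j a := by
        rw [Matrix.mul_apply]
        refine Finset.sum_congr rfl fun j _ => ?_
        rw [Matrix.mul_diagonal, Matrix.transpose_apply]; ring
      have step : ∀ j, (w j * V j b) * V j a
          = V j a * V j b - (if j = i then V j a * V j b else 0) := by
        intro j
        by_cases h : j = i <;> simp [hw, h] <;> ring
      have h2 : ∑ j, V j a * V j b = (1 : Matrix (Fin k) (Fin k) ℝ) a b := by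
        rw [← hVtV]
        simp [Matrix.mul_apply]
      have h1 : (Vᵀ * Matrix.diagonal w * V) a b
          = (1 : Matrix (Fin k) (Fin k) ℝ) a b - V i a * V i b := by
        rw [hLHS, Finset.sum_congr rfl (fun j _ => step j), Finset.sum_sub_distrib,
          Finset.sum_ite_eq' Finset.univ i (fun j => V j a * V j b),
          if_pos (Finset.mem_univ i), h2]
      rw [h1]
      simp only [Matrix.add_apply, Matrix.mul_apply, Matrix.replicateCol_apply, Matrix.replicateRow_apply,
        Finset.univ_unique, Finset.sum_singleton]
      ring
    have hdet : (Vᵀ * Matrix.diagonal w * V).det = 1 - T i i := by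
      rw [hmat, Matrix.det_one_add_replicateCol_mul_replicateRow, hTii]
      simp only [dotProduct, mul_neg, Finset.sum_neg_distrib]
      ring
    have hprod : ∀ S ∈ pows, (∏ j ∈ S, w j) = if i ∈ S then 0 else 1 := by
      intro S _
      by_cases hi : i ∈ S
      · rw [if_pos hi]
        exact Finset.prod_eq_zero hi (by simp [hw])
      · rw [if_neg hi]
        refine Finset.prod_eq_one fun j hj => ?_
        have : j ≠ i := fun h => hi (h ▸ hj)
        simp [hw, this]
    calc ∑ S ∈ pows.filter (fun S => ¬ i ∈ S),
          (T.submatrix (fun x : ↥S => (x : Fin n)) (fun x : ↥S => (x : Fin n))).det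
        = ∑ S ∈ pows.filter (fun S => ¬ i ∈ S), colMinor V S * colMinor V S :=
          Finset.sum_congr rfl fun S hS => hdd S (Finset.filter_subset _ _ hS)
      _ = ∑ S ∈ pows, if ¬ i ∈ S then colMinor V S * colMinor V S else 0 :=
          Finset.sum_filter _ _
      _ = ∑ S ∈ pows, (∏ j ∈ S, w j) * (colMinor V S * colMinor V S) := by
          refine Finset.sum_congr rfl fun S hS => ?_
          rw [hprod S hS]
          by_cases hi : i ∈ S <;> simp [hi]
      _ = 1 - T i i := by rw [← hcb, hdet]
  have hsplit := Finset.sum_filter_add_sum_filter_not pows (fun S => i ∈ S)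
    (fun S => (T.submatrix (fun x : ↥S => (x : Fin n)) (fun x : ↥S => (x : Fin n))).det)
  rw [hden, mul_one]
  rw [hnum, hden] at hsplit
  linarith
end

section
/- Let T be an n × n real orthogonal projection matrix of rank k whose diagonal entries are all equal to k/n. Then for every nonempty subset A ⊆ [n], the principal submatrix T_{AA} satisfies rank(T_{AA}) ≥ |A| · k/n. -/
open Finset Matrix

lemma trace_eq_sum_eigs {m : Type*} [Fintype m] [DecidableEq m] {M : Matrix m m ℝ}
    (hM : M.IsHermitian) : M.trace = ∑ i, hM.eigenvalues i := by
  conv_lhs => rw [hM.spectral_theorem, Unitary.conjStarAlgAut_apply]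
  rw [Matrix.trace_mul_cycle]
  have : (star (hM.eigenvectorUnitary : Matrix m m ℝ)) * (hM.eigenvectorUnitary : Matrix m m ℝ)
      = 1 := Unitary.coe_star_mul_self _
  rw [this, Matrix.one_mul, Matrix.trace_diagonal]
  simp

/-- For an `n × n` real orthogonal projection matrix `T` of rank `k` with constant diagonal
`k/n`, every nonempty principal submatrix `T_AA` satisfies `rank(T_AA) ≥ |A|·k/n`. -/
theorem projection_constDiag_principal_rank (n k : ℕ) (T : Matrix (Fin n) (Fin n) ℝ)
    (hsymm : T.IsSymm) (hproj : T * T = T) (hrank : T.rank = k)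
    (hdiag : ∀ i : Fin n, T i i = (k : ℝ) / (n : ℝ)) :
    ∀ A : Finset (Fin n), A.Nonempty →
      (A.card : ℝ) * (k : ℝ) / (n : ℝ) ≤
        ((T.submatrix (fun x : ↥A => (x : Fin n)) (fun x : ↥A => (x : Fin n))).rank : ℝ) := by
  intro A hA
  set e : ↥A → Fin n := fun x => (x : Fin n) with he
  set M : Matrix ↥A ↥A ℝ := T.submatrix e e with hMdef
  -- T is PSD
  have hTherm : T.IsHermitian := by
    rwa [Matrix.IsHermitian, Matrix.conjTranspose_eq_transpose_of_trivial]
  have hTpsd : T.PosSemidef := by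
    have : T = Tᴴ * T := by
      rw [Matrix.conjTranspose_eq_transpose_of_trivial, hsymm.eq, hproj]
    rw [this]
    exact Matrix.posSemidef_conjTranspose_mul_self T
  -- 1 - T is PSD
  have hcompl : (1 - T).PosSemidef := by
    have hsub : (1 - T) = (1 - T)ᴴ * (1 - T) := by
      rw [Matrix.conjTranspose_eq_transpose_of_trivial]
      have : (1 - T)ᵀ = 1 - T := by
        rw [Matrix.transpose_sub, Matrix.transpose_one, hsymm.eq]
      rw [this]
      rw [Matrix.sub_mul, Matrix.mul_sub, Matrix.mul_sub, Matrix.one_mul, Matrix.mul_one, hproj, Matrix.one_mul]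
      abel
    rw [hsub]
    exact Matrix.posSemidef_conjTranspose_mul_self _
  have hMpsd : M.PosSemidef := hTpsd.submatrix e
  have hMherm : M.IsHermitian := hMpsd.1
  -- submatrix of 1 - T
  have hinj : Function.Injective e := Subtype.val_injective
  have hIsub : (1 - T).submatrix e e = 1 - M := by
    ext i j
    simp [Matrix.sub_apply, Matrix.one_apply, hinj.eq_iff, hMdef]
  have hcomplM : (1 - M).PosSemidef := hIsub ▸ hcompl.submatrix e
  -- eigenvalues of M are in [0,1]
  have hev_nonneg : ∀ i, 0 ≤ hMherm.eigenvalues i := hMpsd.eigenvalues_nonneg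
  have hev_le_one : ∀ i, hMherm.eigenvalues i ≤ 1 := by
    intro i
    have h1 := hcomplM.dotProduct_mulVec_nonneg (⇑(hMherm.eigenvectorBasis i))
    have h2 := hMherm.eigenvalues_eq i
    have hnorm : dotProduct (star ⇑(hMherm.eigenvectorBasis i)) ⇑(hMherm.eigenvectorBasis i)
        = 1 := by
      have := hMherm.eigenvectorBasis.orthonormal.1 i
      rw [EuclideanSpace.norm_eq] at this
      have hsum : ∑ j, (hMherm.eigenvectorBasis i j) ^ 2 = 1 := by
        have h := congrArg (· ^ 2) this
        simp only [one_pow] at h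
        rw [Real.sq_sqrt (by positivity)] at h
        simpa [sq_abs] using h
      simpa [dotProduct, pow_two] using hsum
    have h3 : dotProduct (star ⇑(hMherm.eigenvectorBasis i))
        ((1 - M) *ᵥ ⇑(hMherm.eigenvectorBasis i))
        = 1 - hMherm.eigenvalues i := by
      rw [Matrix.sub_mulVec, dotProduct_sub, Matrix.one_mulVec, hnorm]
      simp only [RCLike.re_to_real] at h2
      rw [← h2]
    rw [h3] at h1
    linarith
  -- trace of M
  have htrace : M.trace = (A.card : ℝ) * (k : ℝ) / (n : ℝ) := by
    rw [Matrix.trace]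
    simp only [Matrix.diag, hMdef, Matrix.submatrix_apply, hdiag]
    rw [Finset.sum_const]
    simp [Finset.card_univ, mul_div_assoc]
  -- trace = sum of eigenvalues ≤ rank
  have hsum := trace_eq_sum_eigs hMherm
  have hrankM := hMherm.rank_eq_card_non_zero_eigs
  have hle : ∑ i, hMherm.eigenvalues i ≤ (M.rank : ℝ) := by
    rw [hrankM]
    calc ∑ i, hMherm.eigenvalues i
        = ∑ i ∈ Finset.univ.filter (fun i => hMherm.eigenvalues i ≠ 0),
            hMherm.eigenvalues i := by
          rw [Finset.sum_filter_ne_zero]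
      _ ≤ ∑ i ∈ Finset.univ.filter (fun i => hMherm.eigenvalues i ≠ 0), 1 := by
          exact Finset.sum_le_sum fun i _ => hev_le_one i
      _ = ((Finset.univ.filter (fun i => hMherm.eigenvalues i ≠ 0)).card : ℝ) := by
          simp
      _ = ((Fintype.card {i // hMherm.eigenvalues i ≠ 0}) : ℝ) := by
          rw [Fintype.card_subtype]
  rw [← htrace, hsum]
  exact hle
end

section
/- Let X be a real full-rank k × n matrix (k ≤ n) such that for every column index e ∈ [n], the sum Σ_{B} det(X_B)², taken over k-subsets B ⊆ [n] containing e, is the same. Then the matroid M(X) represented by X (bases are the k-subsets B with det(X_B) ≠ 0) is uniformly dense, i.e., |A|/rank(X_A) ≤ n/k for every nonempty A ⊆ [n]. -/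
open Finset Matrix

-- Gram determinant = square of det via an equiv
lemma gram_sq {k : ℕ} {ι : Type*} [Fintype ι] [DecidableEq ι] (M : Matrix (Fin k) ι ℝ)
    (e : Fin k ≃ ι) : (M * Mᵀ).det = (M.submatrix id e).det ^ 2 := by
  have h : M * Mᵀ = (M.submatrix id e) * (M.submatrix id e)ᵀ := by
    ext i j
    simp only [mul_apply, submatrix_apply, transpose_apply, id]
    exact (Equiv.sum_comp e fun b => M i b * M j b).symm
  rw [h, det_mul, det_transpose, sq]

lemma mu_ne_iff {k n : ℕ} (X : Matrix (Fin k) (Fin n) ℝ) (B : Finset (Fin n)) (hB : B.card = k) :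
    ((X.submatrix id (fun x : ↥B => (x : Fin n))) *
      (X.submatrix id (fun x : ↥B => (x : Fin n)))ᵀ).det ≠ 0 ↔
    LinearIndependent ℝ (fun b : ↥B => Xᵀ (b : Fin n)) := by
  let e : Fin k ≃ ↥B := (finCongr hB.symm).trans B.equivFin.symm
  rw [gram_sq _ e, pow_ne_zero_iff (by norm_num)]
  rw [show ((X.submatrix id (fun x : ↥B => (x : Fin n))).submatrix id e)
      = X.submatrix id (fun i => ((e i : ↥B) : Fin n)) from rfl]
  constructor
  · intro h
    have hu : IsUnit (X.submatrix id (fun i => ((e i : ↥B) : Fin n))) :=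
      (Matrix.isUnit_iff_isUnit_det _).mpr (isUnit_iff_ne_zero.mpr h)
    have hli := Matrix.linearIndependent_cols_iff_isUnit.mpr hu
    have : (fun i => (X.submatrix id (fun i => ((e i : ↥B) : Fin n)))ᵀ i)
        = (fun b : ↥B => Xᵀ (b : Fin n)) ∘ e := rfl
    change LinearIndependent ℝ ((fun b : ↥B => Xᵀ (b : Fin n)) ∘ e) at hli
    exact (linearIndependent_equiv e).mp hli
  · intro h
    have hli := (linearIndependent_equiv e).mpr h
    have : (fun b : ↥B => Xᵀ (b : Fin n)) ∘ e
        = (fun i => (X.submatrix id (fun i => ((e i : ↥B) : Fin n)))ᵀ i) := rfl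
    rw [this] at hli
    have hu := Matrix.linearIndependent_cols_iff_isUnit.mp hli
    exact isUnit_iff_ne_zero.mp ((Matrix.isUnit_iff_isUnit_det _).mp hu)

lemma mu_nonneg {k n : ℕ} (X : Matrix (Fin k) (Fin n) ℝ) (B : Finset (Fin n)) (hB : B.card = k) :
    0 ≤ ((X.submatrix id (fun x : ↥B => (x : Fin n))) *
      (X.submatrix id (fun x : ↥B => (x : Fin n)))ᵀ).det := by
  rw [gram_sq _ ((finCongr hB.symm).trans B.equivFin.symm)]
  exact sq_nonneg _

lemma exists_good_B {k n : ℕ} (X : Matrix (Fin k) (Fin n) ℝ) (hX : X.rank = k) :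
    ∃ B : Finset (Fin n), B.card = k ∧ LinearIndependent ℝ (fun b : ↥B => Xᵀ (b : Fin n)) := by
  obtain ⟨b, hb₁, hb₂, hb₃⟩ := exists_linearIndependent ℝ (Set.range Xᵀ)
  have hfin : b.Finite := (Set.finite_range Xᵀ).subset hb₁
  haveI := hfin.fintype
  have hcard : b.toFinset.card = k := by
    have h1 := finrank_span_set_eq_card hb₃
    rw [hb₂] at h1
    have h2 : X.rank = Module.finrank ℝ (Submodule.span ℝ (Set.range Xᵀ)) :=
      Matrix.rank_eq_finrank_span_cols X
    omega
  -- choose indices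
  have hch : ∀ v : b, ∃ j : Fin n, Xᵀ j = (v : Fin k → ℝ) := fun v => hb₁ v.2
  choose g hg using hch
  have hginj : Function.Injective g := by
    intro v w hvw
    have : (v : Fin k → ℝ) = w := by rw [← hg v, ← hg w, hvw]
    exact Subtype.ext this
  refine ⟨Finset.image g Finset.univ, ?_, ?_⟩
  · rw [Finset.card_image_of_injective _ hginj, Finset.card_univ, ← Set.toFinset_card, hcard]
  · have hmem : ∀ x : ↥(Finset.image g Finset.univ), Xᵀ (x : Fin n) ∈ b := by
      rintro ⟨x, hx⟩
      obtain ⟨v, _, rfl⟩ := Finset.mem_image.mp hx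
      simp only [hg v]; exact v.2
    set h : ↥(Finset.image g Finset.univ) → ↥b := fun x => ⟨Xᵀ (x : Fin n), hmem x⟩ with hh
    have hhinj : Function.Injective h := by
      rintro ⟨x, hx⟩ ⟨y, hy⟩ hxy
      obtain ⟨v, _, rfl⟩ := Finset.mem_image.mp hx
      obtain ⟨w, _, rfl⟩ := Finset.mem_image.mp hy
      have : (v : Fin k → ℝ) = w := by
        have := congrArg Subtype.val hxy
        simpa [hh, hg v, hg w] using this
      simp only [Subtype.mk.injEq]
      exact congrArg g (Subtype.ext this)
    have hli := hb₃.comp h hhinj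
    have heq : (Subtype.val ∘ h) = fun x : ↥(Finset.image g Finset.univ) => Xᵀ (x : Fin n) := rfl
    rwa [heq] at hli

set_option maxHeartbeats 1000000 in
lemma card_inter_le_rank {k n : ℕ} (X : Matrix (Fin k) (Fin n) ℝ) (A B : Finset (Fin n))
    (hli : LinearIndependent ℝ (fun b : ↥B => Xᵀ (b : Fin n))) :
    (B ∩ A).card ≤ (X.submatrix id (fun x : ↥A => (x : Fin n))).rank := by
  rw [Matrix.rank_eq_finrank_span_cols]
  set fam : ↥(B ∩ A) → (Fin k → ℝ) := fun x => Xᵀ (x : Fin n) with hfam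
  have hι : Function.Injective (fun x : ↥(B ∩ A) => (⟨(x : Fin n),
      (Finset.mem_inter.mp x.2).1⟩ : ↥B)) := by
    intro x y hxy
    have h := congrArg Subtype.val hxy
    simp only at h
    exact Subtype.ext h
  have hli' : LinearIndependent ℝ fam := hli.comp _ hι
  have h1 : Module.finrank ℝ (Submodule.span ℝ (Set.range fam)) = (B ∩ A).card := by
    rw [finrank_span_eq_card hli', Fintype.card_coe]
  have h2 : Submodule.span ℝ (Set.range fam) ≤
      Submodule.span ℝ (Set.range (X.submatrix id (fun x : ↥A => (x : Fin n)))ᵀ) := by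
    apply Submodule.span_mono
    rintro _ ⟨x, rfl⟩
    exact ⟨⟨(x : Fin n), (Finset.mem_inter.mp x.2).2⟩, rfl⟩
  calc (B ∩ A).card = _ := h1.symm
    _ ≤ _ := Submodule.finrank_mono h2

/-- Let `X` be a full-rank `k × n` real matrix such that the sum of `det(X_B)²` over the
`k`-subsets `B` containing `e` (computed here as the Gram determinant
`det(X_B · X_Bᵀ) = det(X_B)²`) is the same for every column `e`. Then the matroid represented
by `X` is uniformly dense: `|A|/rank(X_A) ≤ n/k` for every nonempty `A ⊆ [n]`. -/
theorem uniformlyDense_of_uniform_determinantal_measure (k n : ℕ) (hk : k ≤ n)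
    (X : Matrix (Fin k) (Fin n) ℝ) (hX : X.rank = k)
    (huni : ∀ e f : Fin n,
      (∑ B ∈ (Finset.powersetCard k (Finset.univ : Finset (Fin n))).filter (fun B => e ∈ B),
        ((X.submatrix id (fun x : ↥B => (x : Fin n))) *
          (X.submatrix id (fun x : ↥B => (x : Fin n)))ᵀ).det)
      = ∑ B ∈ (Finset.powersetCard k (Finset.univ : Finset (Fin n))).filter (fun B => f ∈ B),
        ((X.submatrix id (fun x : ↥B => (x : Fin n))) *
          (X.submatrix id (fun x : ↥B => (x : Fin n)))ᵀ).det) :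
    ∀ A : Finset (Fin n), A.Nonempty →
      (A.card : ℝ) / ((X.submatrix id (fun x : ↥A => (x : Fin n))).rank : ℝ) ≤
        (n : ℝ) / (k : ℝ) := by
  classical
  intro A hA
  rcases Nat.eq_zero_or_pos k with hk0 | hkpos
  · subst hk0
    have h0 : (X.submatrix id (fun x : ↥A => (x : Fin n))).rank = 0 := by
      have := Matrix.rank_le_card_height (X.submatrix id (fun x : ↥A => (x : Fin n)))
      simpa using this
    rw [h0]
    simp
  set P := (Finset.powersetCard k (Finset.univ : Finset (Fin n))) with hP
  set μ : Finset (Fin n) → ℝ := fun B =>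
    ((X.submatrix id (fun x : ↥B => (x : Fin n))) *
      (X.submatrix id (fun x : ↥B => (x : Fin n)))ᵀ).det with hμ
  have hcardP : ∀ B ∈ P, B.card = k := fun B hB => (Finset.mem_powersetCard_univ.mp hB)
  have hμ0 : ∀ B ∈ P, 0 ≤ μ B := fun B hB => mu_nonneg X B (hcardP B hB)
  set S : ℝ := ∑ B ∈ P, μ B with hS
  obtain ⟨B₀, hB₀c, hB₀li⟩ := exists_good_B X hX
  have hB₀P : B₀ ∈ P := Finset.mem_powersetCard_univ.mpr hB₀c
  have hSpos : 0 < S := by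
    have h1 : 0 < μ B₀ :=
      lt_of_le_of_ne (hμ0 B₀ hB₀P) (Ne.symm ((mu_ne_iff X B₀ hB₀c).mpr hB₀li))
    exact lt_of_lt_of_le h1 (Finset.single_le_sum hμ0 hB₀P)
  -- double counting
  have hdc : ∀ T : Finset (Fin n),
      ∑ e ∈ T, ∑ B ∈ P.filter (fun B => e ∈ B), μ B
        = ∑ B ∈ P, ((B ∩ T).card : ℝ) * μ B := by
    intro T
    calc ∑ e ∈ T, ∑ B ∈ P.filter (fun B => e ∈ B), μ B
        = ∑ e ∈ T, ∑ B ∈ P, if e ∈ B then μ B else 0 :=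
          Finset.sum_congr rfl fun e _ => Finset.sum_filter _ _
      _ = ∑ B ∈ P, ∑ e ∈ T, if e ∈ B then μ B else 0 := Finset.sum_comm
      _ = ∑ B ∈ P, ((B ∩ T).card : ℝ) * μ B := by
          refine Finset.sum_congr rfl fun B _ => ?_
          rw [Finset.sum_ite_mem, Finset.sum_const, nsmul_eq_mul, Finset.inter_comm]
  set e₀ : Fin n := ⟨0, lt_of_lt_of_le hkpos hk⟩ with he₀
  set c : ℝ := ∑ B ∈ P.filter (fun B => e₀ ∈ B), μ B with hc
  have hcall : ∀ e : Fin n, ∑ B ∈ P.filter (fun B => e ∈ B), μ B = c := fun e => huni e e₀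
  have h1 : (n : ℝ) * c = (k : ℝ) * S := by
    have h := hdc Finset.univ
    rw [Finset.sum_congr rfl (fun e _ => hcall e), Finset.sum_const, nsmul_eq_mul] at h
    rw [Finset.card_univ, Fintype.card_fin] at h
    rw [h, hS, Finset.mul_sum]
    refine Finset.sum_congr rfl fun B hB => ?_
    rw [Finset.inter_univ, hcardP B hB]
  set r : ℕ := (X.submatrix id (fun x : ↥A => (x : Fin n))).rank with hr
  have h2 : (A.card : ℝ) * c ≤ (r : ℝ) * S := by
    have h := hdc A
    rw [Finset.sum_congr rfl (fun e _ => hcall e), Finset.sum_const, nsmul_eq_mul] at h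
    rw [h, hS, Finset.mul_sum]
    refine Finset.sum_le_sum fun B hB => ?_
    rcases eq_or_ne (μ B) 0 with h0 | h0
    · rw [h0, mul_zero, mul_zero]
    · have hli := (mu_ne_iff X B (hcardP B hB)).mp h0
      have hcard := card_inter_le_rank X A B hli
      exact mul_le_mul_of_nonneg_right (by exact_mod_cast hcard) (hμ0 B hB)
  have key : (A.card : ℝ) * k ≤ (n : ℝ) * r := by
    have h3 : ((A.card : ℝ) * k) * S ≤ ((n : ℝ) * r) * S := by
      calc ((A.card : ℝ) * k) * S = (A.card : ℝ) * ((k : ℝ) * S) := by ring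
        _ = (A.card : ℝ) * ((n : ℝ) * c) := by rw [h1]
        _ = (n : ℝ) * ((A.card : ℝ) * c) := by ring
        _ ≤ (n : ℝ) * ((r : ℝ) * S) := by
            exact mul_le_mul_of_nonneg_left h2 (by positivity)
        _ = ((n : ℝ) * r) * S := by ring
    exact le_of_mul_le_mul_right h3 hSpos
  have hrpos : 0 < r := by
    rcases Nat.eq_zero_or_pos r with h0 | h0
    · exfalso
      rw [h0] at key
      push_cast at key
      have hA1 : (1 : ℝ) ≤ (A.card : ℝ) := by exact_mod_cast hA.card_pos
      have hk1 : (1 : ℝ) ≤ (k : ℝ) := by exact_mod_cast hkpos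
      nlinarith
    · exact h0
  rw [div_le_div_iff₀ (by exact_mod_cast hrpos) (by exact_mod_cast hkpos)]
  exact key
end
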